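/- arXiv:math/0612570 — 5 statements merged into one kernel-verified Lean document; each statement's English description precedes it below -/
import Mathlib

section
/- Let 𝔄 be a unital C*-algebra, 𝔅 ⊆ 𝔄 a unital C*-subalgebra containing the unit of 𝔄, and Φ : 𝔄 → 𝔅 a positive conditional expectation. Let X, Y ∈ 𝔄 be such that the norm-closed subalgebras generated by {X} ∪ 𝔅 (index 1) and by {Y} ∪ 𝔅 (index 2) are monotonically independent over 𝔅. For W ∈ 𝔄 and z ∈ 𝔅 with ‖z‖·‖W‖ < 1 define 𝔥_W(z) = Φ((1 − zW)⁻¹ z). Then there exists ε > 0 such that for all z ∈ 𝔅 with ‖z‖ < ε all the relevant inverses exist and 𝔥_{X+Y}(z) = 𝔥_X(𝔥_Y(z)). -/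
open scoped BigOperators ComplexStarModule

/-- An index tuple `j : Fin (ℓ+1) → I` is V-shaped if it is strictly decreasing up to some
position `t` and strictly increasing from `t` on; this encodes the index patterns
`i_m > ⋯ > i_1 < k_1 < ⋯ < k_n` appearing in condition (b) of monotonic independence. -/
def VShaped {I : Type*} [LinearOrder I] {ℓ : ℕ} (j : Fin (ℓ + 1) → I) : Prop :=
  ∃ t : Fin (ℓ + 1),
    (∀ r s : Fin (ℓ + 1), r < s → s ≤ t → j s < j r) ∧
    (∀ r s : Fin (ℓ + 1), t ≤ r → r < s → j r < j s)

/-- A family of subsets `S i` of `A`, indexed by a totally ordered set `I`, is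
monotonically independent with respect to `Φ : A → A`
(`Φ` being a `𝔅`-valued conditional expectation, viewed inside `A`) if:
(a) `Φ (A X_i X_j X_k B) = Φ (A X_i Φ(X_j) X_k B)` whenever `i < j > k` (with the
outer factors `A`, `B` possibly omitted), and
(b) `Φ` factorizes on products whose index tuple decreases strictly and then increases
strictly (`i_m > ⋯ > i_1 < k_1 < ⋯ < k_n`). -/
def MonoIndep {A : Type*} [Monoid A] {I : Type*} [LinearOrder I]
    (Φ : A → A) (S : I → Set A) : Prop :=
  (∀ i j k : I, i < j → k < j → ∀ x ∈ S i, ∀ y ∈ S j, ∀ z ∈ S k,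
      (∀ a b : A, Φ (a * x * y * z * b) = Φ (a * x * Φ y * z * b)) ∧
      (∀ b : A, Φ (x * y * z * b) = Φ (x * Φ y * z * b)) ∧
      (∀ a : A, Φ (a * x * y * z) = Φ (a * x * Φ y * z)) ∧
      Φ (x * y * z) = Φ (x * Φ y * z)) ∧
  (∀ (ℓ : ℕ) (j : Fin (ℓ + 1) → I), VShaped j →
      ∀ x : Fin (ℓ + 1) → A, (∀ r, x r ∈ S (j r)) →
      Φ (List.ofFn x).prod = (List.ofFn fun r => Φ (x r)).prod)

/-- The operator-valued transform `𝔥_W(z) = Φ((1 - zW)⁻¹ z)`. -/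
noncomputable def hTrans {A : Type*} [Ring A] [Algebra ℂ A]
    (Φ : A →ₗ[ℂ] A) (W z : A) : A :=
  Φ (Ring.inverse (1 - z * W) * z)

private theorem mul_pow_shift' {M : Type*} [Monoid M] (a b : M) (n : ℕ) :
    (a * b) ^ n * a = a * (b * a) ^ n := by
  induction n with
  | zero => simp
  | succ n ih =>
    calc (a*b)^(n+1)*a = a*b*((a*b)^n*a) := by rw [pow_succ']; simp [mul_assoc]
      _ = a*b*(a*(b*a)^n) := by rw [ih]
      _ = a*(b*a)^(n+1) := by rw [pow_succ']; simp [mul_assoc]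

private theorem posmap_sa_bound {A : Type*} [CStarAlgebra A] [PartialOrder A]
    [StarOrderedRing A] [Nontrivial A] (Φ : A →ₗ[ℂ] A)
    (hpos0 : ∀ a : A, 0 ≤ a → 0 ≤ Φ a)
    (hsc : ∀ r : ℝ, Φ (algebraMap ℝ A r) = algebraMap ℝ A r)
    {b : A} (hb : IsSelfAdjoint b) : ‖Φ b‖ ≤ 3 * ‖b‖ := by
  set c : A := algebraMap ℝ A ‖b‖ with hc
  have h1 : b ≤ c := hb.le_algebraMap_norm_self
  have h2 : -c ≤ b := hb.neg_algebraMap_norm_le_self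
  have h3 : (0:A) ≤ b + c := by
    have := add_le_add_left h2 c; simpa using this
  have h4 : b + c ≤ algebraMap ℝ A (2*‖b‖) := by
    have h := add_le_add_left h1 c
    rw [two_mul, map_add]
    exact h
  have h5 : (0:A) ≤ Φ (b + c) := hpos0 _ h3
  have h6 : Φ (b + c) ≤ algebraMap ℝ A (2*‖b‖) := by
    have hd := hpos0 _ (sub_nonneg.mpr h4)
    rw [map_sub, hsc] at hd
    exact sub_nonneg.mp hd
  have h7 : ‖Φ (b + c)‖ ≤ 2*‖b‖ :=
    (CStarAlgebra.norm_le_iff_le_algebraMap _ (by positivity) h5).mpr h6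
  have h8 : Φ b = Φ (b + c) - c := by
    rw [map_add]
    rw [hc, hsc]
    abel
  have h9 : ‖c‖ = ‖b‖ := by
    rw [hc, norm_algebraMap', Real.norm_eq_abs, abs_of_nonneg (norm_nonneg b)]
  rw [h8]
  calc ‖Φ (b+c) - c‖ ≤ ‖Φ (b+c)‖ + ‖c‖ := norm_sub_le _ _
    _ ≤ 2*‖b‖ + ‖b‖ := by rw [h9]; linarith
    _ = 3*‖b‖ := by ring

private theorem posmap_bound {A : Type*} [CStarAlgebra A] [PartialOrder A]
    [StarOrderedRing A] [Nontrivial A] (Φ : A →ₗ[ℂ] A)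
    (hpos0 : ∀ a : A, 0 ≤ a → 0 ≤ Φ a)
    (hsc : ∀ r : ℝ, Φ (algebraMap ℝ A r) = algebraMap ℝ A r)
    (a : A) : ‖Φ a‖ ≤ 8 * ‖a‖ := by
  have hre : ‖(ℜ a : A)‖ ≤ ‖a‖ := by
    rw [realPart_apply_coe, norm_smul]
    have h1 : ‖a + star a‖ ≤ ‖a‖ + ‖a‖ := by
      calc ‖a + star a‖ ≤ ‖a‖ + ‖star a‖ := norm_add_le _ _
        _ = ‖a‖ + ‖a‖ := by rw [norm_star]
    have h2 : ‖(2:ℝ)⁻¹‖ = 2⁻¹ := by norm_num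
    rw [h2]; linarith
  have him : ‖(ℑ a : A)‖ ≤ ‖a‖ := by
    rw [imaginaryPart_apply_coe, norm_smul, norm_smul]
    have h1 : ‖a - star a‖ ≤ ‖a‖ + ‖a‖ := by
      calc ‖a - star a‖ ≤ ‖a‖ + ‖star a‖ := norm_sub_le _ _
        _ = ‖a‖ + ‖a‖ := by rw [norm_star]
    have h2 : ‖(-Complex.I)‖ = 1 := by simp
    have h3 : ‖(2:ℝ)⁻¹‖ = 2⁻¹ := by norm_num
    rw [h2, h3]; linarith
  have hdecomp : Φ a = Φ (ℜ a : A) + Complex.I • Φ (ℑ a : A) := by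
    conv_lhs => rw [← realPart_add_I_smul_imaginaryPart a]
    rw [map_add, map_smul]
  have b1 : ‖Φ (ℜ a : A)‖ ≤ 3 * ‖a‖ := by
    have := posmap_sa_bound Φ hpos0 hsc (ℜ a).2
    have h := hre
    nlinarith [norm_nonneg (Φ (ℜ a : A))]
  have b2 : ‖Φ (ℑ a : A)‖ ≤ 3 * ‖a‖ := by
    have := posmap_sa_bound Φ hpos0 hsc (ℑ a).2
    nlinarith [norm_nonneg (Φ (ℑ a : A))]
  rw [hdecomp]
  have h4 : ‖Complex.I • Φ (ℑ a : A)‖ = ‖Φ (ℑ a : A)‖ := by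
    rw [norm_smul, Complex.norm_I, one_mul]
  calc ‖Φ (ℜ a : A) + Complex.I • Φ (ℑ a : A)‖
      ≤ ‖Φ (ℜ a : A)‖ + ‖Complex.I • Φ (ℑ a : A)‖ := norm_add_le _ _
    _ ≤ 3 * ‖a‖ + 3 * ‖a‖ := by rw [h4]; linarith
    _ ≤ 8 * ‖a‖ := by nlinarith [norm_nonneg a]

/-- Theorem 3.2: if `X` and `Y` are monotonically independent over `𝔅`
(the norm-closed subalgebras generated by `{X} ∪ 𝔅` resp. `{Y} ∪ 𝔅`, with index `1 < 2`),
then `𝔥_{X+Y} = 𝔥_X ∘ 𝔥_Y` in a neighborhood of `0 ∈ 𝔅`. -/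
theorem hTrans_comp {A : Type*} [CStarAlgebra A] [PartialOrder A] [StarOrderedRing A]
    (B : StarSubalgebra ℂ A) (hBclosed : IsClosed (B : Set A))
    (Φ : A →ₗ[ℂ] A)
    (hmem : ∀ x : A, Φ x ∈ B)
    (hfix : ∀ b ∈ B, Φ b = b)
    (hbimod : ∀ b₁ ∈ B, ∀ b₂ ∈ B, ∀ x : A, Φ (b₁ * x * b₂) = b₁ * Φ x * b₂)
    (hpos : ∀ a : A, 0 ≤ Φ (star a * a))
    (X Y : A)
    (hindep : MonoIndep (fun x => Φ x)
      (fun t : Fin 2 =>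
        if t = 0 then
          ((Algebra.adjoin ℂ ({X} ∪ (B : Set A))).topologicalClosure : Set A)
        else
          ((Algebra.adjoin ℂ ({Y} ∪ (B : Set A))).topologicalClosure : Set A))) :
    ∃ ε > (0 : ℝ), ∀ z ∈ B, ‖z‖ < ε →
      IsUnit (1 - z * (X + Y)) ∧ IsUnit (1 - z * Y) ∧
      IsUnit (1 - hTrans Φ Y z * X) ∧
      hTrans Φ (X + Y) z = hTrans Φ X (hTrans Φ Y z) := by
  obtain hA | hA := subsingleton_or_nontrivial A
  · exact ⟨1, one_pos, fun z _ _ =>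
      ⟨isUnit_of_subsingleton _, isUnit_of_subsingleton _, isUnit_of_subsingleton _,
        Subsingleton.elim _ _⟩⟩
  -- positivity and scalar-fixing consequences
  have hpos0 : ∀ a : A, 0 ≤ a → 0 ≤ Φ a := by
    intro a ha
    have h1 := hpos (CFC.sqrt a)
    rwa [(IsSelfAdjoint.of_nonneg (CFC.sqrt_nonneg a)).star_eq, CFC.sqrt_mul_sqrt_self a ha] at h1
  have hsc : ∀ r : ℝ, Φ (algebraMap ℝ A r) = algebraMap ℝ A r := by
    intro r
    have h1 : algebraMap ℝ A r = algebraMap ℂ A (r:ℂ) := by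
      rw [IsScalarTower.algebraMap_apply ℝ ℂ A]; norm_num
    rw [h1]
    exact hfix _ (B.algebraMap_mem _)
  have hbound : ∀ a : A, ‖Φ a‖ ≤ 8 * ‖a‖ := posmap_bound Φ hpos0 hsc
  -- the continuous version of Φ
  let Φ' : A →L[ℂ] A := Φ.mkContinuous 8 hbound
  have hΦ' : ∀ a : A, Φ' a = Φ a := fun _ => rfl
  -- the subalgebras
  set AX : Subalgebra ℂ A := Algebra.adjoin ℂ ({X} ∪ (B : Set A)) with hAX
  set AY : Subalgebra ℂ A := Algebra.adjoin ℂ ({Y} ∪ (B : Set A)) with hAY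
  have hXAX : X ∈ AX := Algebra.subset_adjoin (Set.mem_union_left _ rfl)
  have hYAY : Y ∈ AY := Algebra.subset_adjoin (Set.mem_union_left _ rfl)
  -- choice of ε
  refine ⟨(32 * (‖X‖+1) * (‖Y‖+1))⁻¹, by positivity, fun z hzB hz => ?_⟩
  have hx1 : (1:ℝ) ≤ ‖X‖+1 := by have := norm_nonneg X; linarith
  have hy1 : (1:ℝ) ≤ ‖Y‖+1 := by have := norm_nonneg Y; linarith
  have hz0 : (0:ℝ) ≤ ‖z‖ := norm_nonneg z
  have ht0 : (0:ℝ) < 32 * (‖X‖+1) * (‖Y‖+1) := by positivity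
  have h1 : ‖z‖ * (32 * (‖X‖+1) * (‖Y‖+1)) < 1 := by
    rw [← one_div] at hz
    exact (lt_div_iff₀ ht0).mp hz
  have hzMx : ‖z‖ * (‖X‖+1) < 1/32 := by nlinarith
  have hzMy : ‖z‖ * (‖Y‖+1) < 1/32 := by nlinarith
  have hzY : ‖z * Y‖ ≤ 1/2 := by
    calc ‖z * Y‖ ≤ ‖z‖ * ‖Y‖ := norm_mul_le _ _
      _ ≤ ‖z‖ * (‖Y‖+1) := by nlinarith
      _ ≤ 1/2 := by linarith
  have hzY1 : ‖z * Y‖ < 1 := lt_of_le_of_lt hzY (by norm_num)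
  have hUzY : IsUnit (1 - z * Y) := isUnit_one_sub_of_norm_lt_one hzY1
  -- u and w
  set u : A := Ring.inverse (1 - z * Y) * z with hu_def
  set w : A := Φ u with hw_def
  have hwB : w ∈ B := hmem u
  have hzu : (1 - z * Y) * u = z := by
    rw [hu_def, ← mul_assoc, Ring.mul_inverse_cancel _ hUzY, one_mul]
  have hrec : u = z + z * Y * u := by
    have h2 : u - z * Y * u = z := by
      have := hzu
      rw [sub_mul, one_mul] at this
      exact this
    exact eq_add_of_sub_eq h2
  have hu2z : ‖u‖ ≤ 2 * ‖z‖ := by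
    have h3 : ‖u‖ ≤ ‖z‖ + ‖z * Y‖ * ‖u‖ := by
      calc ‖u‖ = ‖z + z * Y * u‖ := by rw [← hrec]
        _ ≤ ‖z‖ + ‖z * Y * u‖ := norm_add_le _ _
        _ ≤ ‖z‖ + ‖z * Y‖ * ‖u‖ := by
            have := norm_mul_le (z * Y) u; linarith
    have h4 : ‖z * Y‖ * ‖u‖ ≤ (1/2) * ‖u‖ := by
      have := norm_nonneg u
      nlinarith
    linarith
  have huX : ‖u * X‖ < 1/8 := by
    calc ‖u * X‖ ≤ ‖u‖ * ‖X‖ := norm_mul_le _ _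
      _ ≤ 2 * ‖z‖ * (‖X‖+1) := by nlinarith [norm_nonneg u, norm_nonneg X]
      _ < 1/8 := by nlinarith
  have huX1 : ‖u * X‖ < 1 := lt_trans huX (by norm_num)
  have hwn : ‖w‖ ≤ 16 * ‖z‖ := by
    have := hbound u
    rw [← hw_def] at this
    nlinarith
  have hwX : ‖w * X‖ < 1 := by
    calc ‖w * X‖ ≤ ‖w‖ * ‖X‖ := norm_mul_le _ _
      _ ≤ 16 * ‖z‖ * (‖X‖+1) := by nlinarith [norm_nonneg w, norm_nonneg X]
      _ < 1 := by nlinarith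
  have hUuX : IsUnit (1 - u * X) := isUnit_one_sub_of_norm_lt_one huX1
  have hUwX : IsUnit (1 - w * X) := isUnit_one_sub_of_norm_lt_one hwX
  -- factorization
  have hfact : 1 - z * (X + Y) = (1 - z * Y) * (1 - u * X) := by
    have h2 : (1 - z * Y) * (1 - u * X) = (1 - z * Y) - ((1 - z * Y) * u) * X := by
      noncomm_ring
    rw [h2, hzu]
    noncomm_ring
  have hUsum : IsUnit (1 - z * (X + Y)) := hfact ▸ hUzY.mul hUuX
  -- inverse identity
  have hinvz : Ring.inverse (1 - z * (X + Y)) * z = Ring.inverse (1 - u * X) * u := by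
    have h3 : (1 - z * (X + Y)) * (Ring.inverse (1 - u * X) * u) = z := by
      calc (1 - z * (X + Y)) * (Ring.inverse (1 - u * X) * u)
          = (1 - z * Y) * (((1 - u * X) * Ring.inverse (1 - u * X)) * u) := by
            rw [hfact]; simp [mul_assoc]
        _ = (1 - z * Y) * u := by rw [Ring.mul_inverse_cancel _ hUuX, one_mul]
        _ = z := hzu
    calc Ring.inverse (1 - z * (X + Y)) * z
        = Ring.inverse (1 - z * (X + Y)) * ((1 - z * (X + Y)) * (Ring.inverse (1 - u * X) * u)) := by
          rw [h3]
      _ = (Ring.inverse (1 - z * (X + Y)) * (1 - z * (X + Y))) * (Ring.inverse (1 - u * X) * u) :=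
          (mul_assoc _ _ _).symm
      _ = Ring.inverse (1 - u * X) * u := by
          rw [Ring.inverse_mul_cancel _ hUsum, one_mul]
  -- Neumann series
  have hgu : Summable (fun n : ℕ => (u * X)^n) := summable_geometric_of_norm_lt_one huX1
  have hsu : Summable (fun n : ℕ => (u * X)^n * u) := hgu.mul_right u
  have heu : Ring.inverse (1 - u * X) * u = ∑' n : ℕ, (u * X)^n * u := by
    rw [← geom_series_eq_inverse _ huX1]
    exact (hgu.tsum_mul_right u).symm
  have hgw : Summable (fun n : ℕ => (w * X)^n) := summable_geometric_of_norm_lt_one hwX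
  have hsw : Summable (fun n : ℕ => (w * X)^n * w) := hgw.mul_right w
  have hew : Ring.inverse (1 - w * X) * w = ∑' n : ℕ, (w * X)^n * w := by
    rw [← geom_series_eq_inverse _ hwX]
    exact (hgw.tsum_mul_right w).symm
  -- memberships
  have hXS : X ∈ (AX.topologicalClosure : Set A) := AX.le_topologicalClosure hXAX
  have huS : u ∈ (AY.topologicalClosure : Set A) := by
    have hgzY : Summable (fun n : ℕ => (z * Y)^n) := summable_geometric_of_norm_lt_one hzY1
    have hszY : Summable (fun n : ℕ => (z * Y)^n * z) := hgzY.mul_right z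
    have hu_eq : u = ∑' n : ℕ, (z * Y)^n * z := by
      rw [hu_def, ← geom_series_eq_inverse _ hzY1]
      exact (hgzY.tsum_mul_right z).symm
    have hmemAY : ∀ n : ℕ, (z * Y)^n * z ∈ AY := by
      intro n
      exact mul_mem (pow_mem (mul_mem (Algebra.subset_adjoin (Set.mem_union_right _ hzB)) hYAY) n)
        (Algebra.subset_adjoin (Set.mem_union_right _ hzB))
    rw [hu_eq]
    have htend := hszY.hasSum.tendsto_sum_nat
    refine (AY.isClosed_topologicalClosure).mem_of_tendsto htend ?_
    filter_upwards with n
    exact AY.le_topologicalClosure (sum_mem fun i _ => hmemAY i)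
  have hX0mem : X ∈ (if (0 : Fin 2) = 0 then (AX.topologicalClosure : Set A)
      else (AY.topologicalClosure : Set A)) := by
    rw [if_pos rfl]; exact hXS
  have hu1mem : u ∈ (if (1 : Fin 2) = 0 then (AX.topologicalClosure : Set A)
      else (AY.topologicalClosure : Set A)) := by
    rw [if_neg (by decide)]; exact huS
  -- condition (a)
  have condA : ∀ a b : A, Φ (a * X * u * X * b) = Φ (a * X * w * X * b) := by
    have h := (hindep.1 0 1 0 (by decide) (by decide) X hX0mem u hu1mem X hX0mem).1
    exact h
  -- inner replacement
  have inner : ∀ (k : ℕ) (a : A),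
      Φ (a * (X*u)^(k+1)) = Φ (a * ((X*w)^k * (X*u))) := by
    intro k
    induction k with
    | zero => intro a; simp
    | succ k ih =>
      intro a
      have e1 : a * (X*u)^(k+1+1) = a * X * u * X * (u * (X*u)^k) := by
        simp only [pow_succ', mul_assoc]
      have e2 : a * X * w * X * (u * (X*u)^k) = (a * X * w) * (X*u)^(k+1) := by
        simp only [pow_succ', mul_assoc]
      have e3 : (a * X * w) * ((X*w)^k * (X*u)) = a * ((X*w)^(k+1) * (X*u)) := by
        simp only [pow_succ', mul_assoc]
      rw [e1, condA, e2, ih, e3]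
  -- V-shaped factorization
  have vshape : ∀ c : A, c ∈ (AX.topologicalClosure : Set A) →
      Φ (u * c * u) = w * Φ c * w := by
    intro c hc
    have hV : VShaped (![1,0,1] : Fin 3 → Fin 2) := ⟨1, by decide, by decide⟩
    have hx : ∀ r : Fin 3, (![u, c, u] r) ∈
        (fun t : Fin 2 => if t = 0 then (AX.topologicalClosure : Set A)
          else (AY.topologicalClosure : Set A)) ((![1,0,1] : Fin 3 → Fin 2) r) := by
      intro r
      fin_cases r
      · simpa using huS
      · simpa using hc
      · simpa using huS
    have h := hindep.2 2 ![1,0,1] hV ![u, c, u] hx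
    simp only [List.ofFn_succ, List.ofFn_zero, List.prod_cons, List.prod_nil,
      Matrix.cons_val_zero, Matrix.cons_val_one, Matrix.head_cons, Matrix.cons_val_succ,
      mul_one] at h
    calc Φ (u * c * u) = Φ (u * (c * u)) := by rw [mul_assoc]
      _ = Φ u * (Φ c * Φ u) := h
      _ = w * Φ c * w := by rw [← hw_def, mul_assoc]
  -- termwise identity
  have key : ∀ n : ℕ, Φ ((u*X)^n * u) = Φ ((w*X)^n * w) := by
    intro n
    cases n with
    | zero =>
      simp only [pow_zero, one_mul]
      rw [hfix w hwB]
    | succ m =>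
      have hc : (X*w)^m * X ∈ (AX.topologicalClosure : Set A) := by
        have hwAX : w ∈ AX := Algebra.subset_adjoin (Set.mem_union_right _ hwB)
        exact AX.le_topologicalClosure
          (mul_mem (pow_mem (mul_mem hXAX hwAX) m) hXAX)
      calc Φ ((u*X)^(m+1) * u) = Φ (u * (X*u)^(m+1)) := by rw [mul_pow_shift']
        _ = Φ (u * ((X*w)^m * (X*u))) := inner m u
        _ = Φ (u * ((X*w)^m * X) * u) := by simp only [mul_assoc]
        _ = w * Φ ((X*w)^m * X) * w := vshape _ hc
        _ = Φ (w * ((X*w)^m * X) * w) := (hbimod w hwB w hwB _).symm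
        _ = Φ (w * (X*w)^(m+1)) := by simp only [pow_succ, mul_assoc]
        _ = Φ ((w*X)^(m+1) * w) := by rw [mul_pow_shift']
  -- assemble
  have hhYz : hTrans Φ Y z = w := rfl
  refine ⟨hUsum, hUzY, ?_, ?_⟩
  · rw [hhYz]; exact hUwX
  · calc hTrans Φ (X + Y) z = Φ (Ring.inverse (1 - z * (X + Y)) * z) := rfl
      _ = Φ (Ring.inverse (1 - u * X) * u) := by rw [hinvz]
      _ = Φ (∑' n : ℕ, (u*X)^n * u) := by rw [heu]
      _ = ∑' n : ℕ, Φ ((u*X)^n * u) := Φ'.map_tsum hsu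
      _ = ∑' n : ℕ, Φ ((w*X)^n * w) := tsum_congr key
      _ = Φ (∑' n : ℕ, (w*X)^n * w) := (Φ'.map_tsum hsw).symm
      _ = Φ (Ring.inverse (1 - w * X) * w) := by rw [← hew]
      _ = hTrans Φ X (hTrans Φ Y z) := by rw [hhYz]; rfl
end

section
/- Let 𝔄 be a unital C*-algebra, 𝔅 ⊆ 𝔄 a unital C*-subalgebra containing the unit of 𝔄, and Φ : 𝔄 → 𝔅 a positive conditional expectation. Let U, V ∈ 𝔄 be such that U − 1 and V are monotonically independent over 𝔅 (the closed subalgebra generated by {U − 1} ∪ 𝔅 carrying index 1 and that generated by {V} ∪ 𝔅 carrying index 2). For W ∈ 𝔄 and z ∈ 𝔅 small define ϑ_W(z) = Φ((1 − zW)⁻¹ zW) and κ_W(z) = (1 + ϑ_W(z))⁻¹ ϑ_W(z). Then there exists ε > 0 such that for all z ∈ 𝔅 with ‖z‖ < ε all the relevant inverses exist and ϑ_{VU}(z) = ϑ_U(κ_V(z)). -/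
open scoped BigOperators

section AuxGeom

variable {R : Type*} [NormedRing R] [CompleteSpace R]

lemma aux_norm_pow_le [NormOneClass R] (x : R) : ∀ n : ℕ, ‖x ^ n‖ ≤ ‖x‖ ^ n := by
  intro n
  induction n with
  | zero => simp
  | succ n ih =>
      rw [pow_succ, pow_succ]
      exact (norm_mul_le _ _).trans (by gcongr)

lemma aux_norm_inverse_one_sub_le [NormOneClass R] {x : R} (h : ‖x‖ < 1) :
    ‖Ring.inverse (1 - x)‖ ≤ (1 - ‖x‖)⁻¹ := by
  rw [← geom_series_eq_inverse x h]
  have hgeo : Summable fun n : ℕ => ‖x‖ ^ n :=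
    summable_geometric_of_lt_one (norm_nonneg x) h
  have hsum : Summable fun n : ℕ => ‖x ^ n‖ :=
    hgeo.of_nonneg_of_le (fun n => norm_nonneg _) (aux_norm_pow_le x)
  calc ‖∑' n : ℕ, x ^ n‖ ≤ ∑' n : ℕ, ‖x ^ n‖ := norm_tsum_le_tsum_norm hsum
    _ ≤ ∑' n : ℕ, ‖x‖ ^ n := Summable.tsum_le_tsum (aux_norm_pow_le x) hsum hgeo
    _ = (1 - ‖x‖)⁻¹ := tsum_geometric_of_lt_one (norm_nonneg x) h

lemma aux_inverse_one_sub_mem [Algebra ℂ R] (S : Subalgebra ℂ R)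
    (hS : IsClosed (S : Set R)) {x : R} (hx : x ∈ S) (h : ‖x‖ < 1) :
    Ring.inverse (1 - x) ∈ S := by
  have hgs := hasSum_geom_series_inverse x h
  refine hS.mem_of_tendsto hgs.tendsto_sum_nat
    (Filter.Eventually.of_forall fun n => ?_)
  exact Subalgebra.sum_mem S fun i _ => pow_mem hx i

end AuxGeom

lemma aux_ring_inverse_mul {A : Type*} [Ring A] {x y : A} (hx : IsUnit x) (hy : IsUnit y) :
    Ring.inverse (x * y) = Ring.inverse y * Ring.inverse x := by
  rw [← hx.unit_spec, ← hy.unit_spec, ← Units.val_mul, Ring.inverse_unit,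
    Ring.inverse_unit, Ring.inverse_unit, mul_inv_rev, Units.val_mul]

section PhiBound

variable {A : Type*} [CStarAlgebra A] [PartialOrder A] [StarOrderedRing A]

lemma aux_phi_nonneg (Φ : A →ₗ[ℂ] A) (hpos : ∀ a : A, 0 ≤ Φ (star a * a))
    {a : A} (ha : 0 ≤ a) : 0 ≤ Φ a := by
  rw [StarOrderedRing.nonneg_iff] at ha
  induction ha using AddSubmonoid.closure_induction with
  | mem x hx => obtain ⟨s, rfl⟩ := hx; exact hpos s
  | zero => simp
  | add x y hx hy hx' hy' => rw [map_add]; exact add_nonneg hx' hy'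

lemma aux_phi_bound (Φ : A →ₗ[ℂ] A) (h1 : Φ 1 = 1)
    (hpos : ∀ a : A, 0 ≤ Φ (star a * a)) (x : A) : ‖Φ x‖ ≤ 6 * ‖x‖ := by
  rcases subsingleton_or_nontrivial A with hs | hn
  · have h0 : Φ x = 0 := Subsingleton.elim _ _
    have h0' : x = 0 := Subsingleton.elim _ _
    simp [h0, h0']
  have hmono : ∀ {a b : A}, a ≤ b → Φ a ≤ Φ b := by
    intro a b hab
    have h0 : 0 ≤ Φ (b - a) := aux_phi_nonneg Φ hpos (sub_nonneg.mpr hab)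
    rw [map_sub, sub_nonneg] at h0
    exact h0
  have halg : ∀ t : ℝ, Φ (algebraMap ℝ A t) = algebraMap ℝ A t := by
    intro t
    rw [IsScalarTower.algebraMap_apply ℝ ℂ A, Algebra.algebraMap_eq_smul_one, map_smul, h1]
  have hsa : ∀ y : A, IsSelfAdjoint y → ‖Φ y‖ ≤ 3 * ‖y‖ := by
    intro y hy
    have e1 : -(algebraMap ℝ A ‖y‖) ≤ Φ y := by
      have h' := hmono hy.neg_algebraMap_norm_le_self
      rwa [map_neg, halg] at h'
    have e2 : Φ y ≤ algebraMap ℝ A ‖y‖ := by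
      have h' := hmono hy.le_algebraMap_norm_self
      rwa [halg] at h'
    have e3 : (0 : A) ≤ Φ y + algebraMap ℝ A ‖y‖ := by
      rwa [← sub_nonneg, sub_neg_eq_add] at e1
    have e4 : Φ y + algebraMap ℝ A ‖y‖ ≤ algebraMap ℝ A ‖y‖ + algebraMap ℝ A ‖y‖ :=
      add_le_add e2 le_rfl
    have e5 : ‖Φ y + algebraMap ℝ A ‖y‖‖ ≤ 2 * ‖y‖ := by
      refine (CStarAlgebra.norm_le_norm_of_nonneg_of_le e3 e4).trans ?_
      calc ‖algebraMap ℝ A ‖y‖ + algebraMap ℝ A ‖y‖‖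
          ≤ ‖algebraMap ℝ A ‖y‖‖ + ‖algebraMap ℝ A ‖y‖‖ := norm_add_le _ _
        _ = 2 * ‖y‖ := by
            rw [norm_algebraMap', Real.norm_eq_abs, abs_of_nonneg (norm_nonneg y)]; ring
    calc ‖Φ y‖ = ‖(Φ y + algebraMap ℝ A ‖y‖) - algebraMap ℝ A ‖y‖‖ := by
          rw [add_sub_cancel_right]
      _ ≤ ‖Φ y + algebraMap ℝ A ‖y‖‖ + ‖algebraMap ℝ A ‖y‖‖ := norm_sub_le _ _
      _ ≤ 2 * ‖y‖ + ‖y‖ := by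
          refine add_le_add e5 (le_of_eq ?_)
          rw [norm_algebraMap', Real.norm_eq_abs, abs_of_nonneg (norm_nonneg y)]
      _ = 3 * ‖y‖ := by ring
  have hre : ‖(realPart x : A)‖ ≤ ‖x‖ := by
    rw [realPart_apply_coe, norm_smul]
    have : ‖x + star x‖ ≤ 2 * ‖x‖ := by
      refine (norm_add_le _ _).trans ?_
      rw [norm_star]; ring_nf; rfl
    have h2 : ‖(2⁻¹ : ℝ)‖ = 2⁻¹ := by norm_num
    rw [h2]
    nlinarith [norm_nonneg (x + star x)]
  have him : ‖(imaginaryPart x : A)‖ ≤ ‖x‖ := by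
    rw [imaginaryPart_apply_coe, norm_smul, norm_smul]
    have h1' : ‖-Complex.I‖ = 1 := by simp
    have h2 : ‖(2⁻¹ : ℝ)‖ = 2⁻¹ := by norm_num
    have : ‖x - star x‖ ≤ 2 * ‖x‖ := by
      refine (norm_sub_le _ _).trans ?_
      rw [norm_star]; ring_nf; rfl
    rw [h1', h2, one_mul]
    nlinarith [norm_nonneg (x - star x)]
  have hdecomp : Φ x = Φ (realPart x : A) + Complex.I • Φ (imaginaryPart x : A) := by
    conv_lhs => rw [← realPart_add_I_smul_imaginaryPart x]
    rw [map_add, map_smul]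
  rw [hdecomp]
  calc ‖Φ (realPart x : A) + Complex.I • Φ (imaginaryPart x : A)‖
      ≤ ‖Φ (realPart x : A)‖ + ‖Complex.I • Φ (imaginaryPart x : A)‖ := norm_add_le _ _
    _ = ‖Φ (realPart x : A)‖ + ‖Φ (imaginaryPart x : A)‖ := by
        rw [norm_smul, Complex.norm_I, one_mul]
    _ ≤ 3 * ‖(realPart x : A)‖ + 3 * ‖(imaginaryPart x : A)‖ :=
        add_le_add (hsa _ (realPart x).2) (hsa _ (imaginaryPart x).2)
    _ ≤ 3 * ‖x‖ + 3 * ‖x‖ := by gcongr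
    _ = 6 * ‖x‖ := by ring

end PhiBound


/-- `ϑ_W(z) = Φ((1 - zW)⁻¹ zW)`. -/
noncomputable def thetaTrans {A : Type*} [Ring A] [Algebra ℂ A]
    (Φ : A →ₗ[ℂ] A) (W z : A) : A :=
  Φ (Ring.inverse (1 - z * W) * (z * W))

/-- `κ_W(z) = (1 + ϑ_W(z))⁻¹ ϑ_W(z)`. -/
noncomputable def kappaTrans {A : Type*} [Ring A] [Algebra ℂ A]
    (Φ : A →ₗ[ℂ] A) (W z : A) : A :=
  Ring.inverse (1 + thetaTrans Φ W z) * thetaTrans Φ W z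

/-- key identity in the proof of Theorem 3.4: if `U - 1` and `V` are
monotonically independent over `𝔅`, then `ϑ_{VU}(z) = ϑ_U(κ_V(z))` for `z` near `0 ∈ 𝔅`. -/
theorem thetaTrans_comp {A : Type*} [CStarAlgebra A] [PartialOrder A] [StarOrderedRing A]
    (B : StarSubalgebra ℂ A) (hBclosed : IsClosed (B : Set A))
    (Φ : A →ₗ[ℂ] A)
    (hmem : ∀ x : A, Φ x ∈ B)
    (hfix : ∀ b ∈ B, Φ b = b)
    (hbimod : ∀ b₁ ∈ B, ∀ b₂ ∈ B, ∀ x : A, Φ (b₁ * x * b₂) = b₁ * Φ x * b₂)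
    (hpos : ∀ a : A, 0 ≤ Φ (star a * a))
    (U V : A)
    (hindep : MonoIndep (fun x => Φ x)
      (fun t : Fin 2 =>
        if t = 0 then
          ((Algebra.adjoin ℂ ({U - 1} ∪ (B : Set A))).topologicalClosure : Set A)
        else
          ((Algebra.adjoin ℂ ({V} ∪ (B : Set A))).topologicalClosure : Set A))) :
    ∃ ε > (0 : ℝ), ∀ z ∈ B, ‖z‖ < ε →
      IsUnit (1 - z * (V * U)) ∧ IsUnit (1 - z * V) ∧
      IsUnit (1 + thetaTrans Φ V z) ∧ IsUnit (1 - kappaTrans Φ V z * U) ∧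
      thetaTrans Φ (V * U) z = thetaTrans Φ U (kappaTrans Φ V z) := by
  rcases subsingleton_or_nontrivial A with hsub | hnt
  · refine ⟨1, one_pos, fun z hz hz1 => ?_⟩
    refine ⟨isUnit_of_subsingleton _, isUnit_of_subsingleton _, isUnit_of_subsingleton _,
      isUnit_of_subsingleton _, Subsingleton.elim _ _⟩
  obtain ⟨ha, hb⟩ := hindep
  have hΦ1 : Φ 1 = 1 := hfix 1 (one_mem B)
  have hbound := aux_phi_bound Φ hΦ1 hpos
  set Φ' : A →L[ℂ] A := Φ.mkContinuous 6 hbound with hΦ'def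
  -- the two subalgebras
  set SA : Subalgebra ℂ A := (Algebra.adjoin ℂ ({U - 1} ∪ (B : Set A))).topologicalClosure
    with hSAdef
  set SV : Subalgebra ℂ A := (Algebra.adjoin ℂ ({V} ∪ (B : Set A))).topologicalClosure
    with hSVdef
  have hSVclosed : IsClosed (SV : Set A) := Subalgebra.isClosed_topologicalClosure _
  have hBA : ∀ {b : A}, b ∈ B → b ∈ SA := fun hb' =>
    Subalgebra.le_topologicalClosure _ (Algebra.subset_adjoin (Or.inr hb'))
  have hBV : ∀ {b : A}, b ∈ B → b ∈ SV := fun hb' =>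
    Subalgebra.le_topologicalClosure _ (Algebra.subset_adjoin (Or.inr hb'))
  have huSA : U - 1 ∈ SA :=
    Subalgebra.le_topologicalClosure _ (Algebra.subset_adjoin (Or.inl rfl))
  have hVSV : V ∈ SV :=
    Subalgebra.le_topologicalClosure _ (Algebra.subset_adjoin (Or.inl rfl))
  refine ⟨(100 * (‖U‖ + 2) * (‖V‖ + 1))⁻¹, by positivity, fun z hzB hz => ?_⟩
  set u : A := U - 1 with hudef
  set c : A := z * V with hcdef
  -- basic norm bound
  have hU0 : (0:ℝ) ≤ ‖U‖ := norm_nonneg _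
  have hV0 : (0:ℝ) ≤ ‖V‖ := norm_nonneg _
  have hz0 : (0:ℝ) ≤ ‖z‖ := norm_nonneg _
  have hc0 : (0:ℝ) ≤ ‖c‖ := norm_nonneg _
  have hcn : ‖c‖ * (12 * (‖U‖ + 2)) < 1 := by
    have h1 : ‖c‖ ≤ ‖z‖ * ‖V‖ := norm_mul_le _ _
    have hX : (0:ℝ) < 100 * (‖U‖ + 2) * (‖V‖ + 1) := by positivity
    have h2 : ‖z‖ * (100 * (‖U‖ + 2) * (‖V‖ + 1)) < 1 := by
      have := mul_lt_mul_of_pos_right hz hX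
      rwa [inv_mul_cancel₀ (ne_of_gt hX)] at this
    nlinarith [mul_le_mul_of_nonneg_right h1 (by positivity : (0:ℝ) ≤ 12 * (‖U‖ + 2))]
  have hc1 : ‖c‖ < 1 := by nlinarith
  have hu_norm : ‖u‖ ≤ ‖U‖ + 1 := by
    rw [hudef]
    refine (norm_sub_le _ _).trans ?_
    have := CStarRing.norm_one (E := A)
    simp [this]
  -- r, s, θ
  have hrUnit : IsUnit (1 - c) := isUnit_one_sub_of_norm_lt_one hc1
  set r : A := Ring.inverse (1 - c) with hrdef
  have hr2 : ‖r‖ ≤ 2 := by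
    refine (aux_norm_inverse_one_sub_le hc1).trans ?_
    have h3 : (2:ℝ)⁻¹ ≤ 1 - ‖c‖ := by nlinarith
    calc (1 - ‖c‖)⁻¹ ≤ ((2:ℝ)⁻¹)⁻¹ := by
          exact inv_anti₀ (by norm_num) h3
      _ = 2 := by norm_num
  set s : A := r * c with hsdef
  have hs_norm : ‖s‖ ≤ 2 * ‖c‖ := by
    refine (norm_mul_le _ _).trans ?_
    exact mul_le_mul_of_nonneg_right hr2 hc0
  set θ : A := Φ s with hθdef
  have hθB : θ ∈ B := hmem s
  have hθn : ‖θ‖ ≤ 12 * ‖c‖ := by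
    refine (hbound s).trans ?_
    nlinarith
  have hθ1 : ‖θ‖ < 1 := by nlinarith
  have hsu : ‖s * u‖ < 1 := by
    refine lt_of_le_of_lt (norm_mul_le _ _) ?_
    have := mul_le_mul hs_norm hu_norm (norm_nonneg u) (by positivity)
    nlinarith
  have hθu : ‖θ * u‖ < 1 := by
    refine lt_of_le_of_lt (norm_mul_le _ _) ?_
    have := mul_le_mul hθn hu_norm (norm_nonneg u) (by positivity)
    nlinarith
  have h1θ : IsUnit (1 + θ) := by
    have := isUnit_one_sub_of_norm_lt_one (x := -θ) (by rwa [norm_neg])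
    rwa [sub_neg_eq_add] at this
  -- θ is thetaTrans
  have hθtheta : thetaTrans Φ V z = θ := by
    rw [thetaTrans, hθdef, hsdef, hrdef, hcdef]
  set κ : A := Ring.inverse (1 + θ) * θ with hκdef
  have hκkappa : kappaTrans Φ V z = κ := by
    rw [kappaTrans, hθtheta, hκdef]
  have hκ1 : 1 - κ = Ring.inverse (1 + θ) := by
    have h := Ring.inverse_mul_cancel (1 + θ) h1θ
    rw [mul_add, mul_one] at h
    calc 1 - κ
        = (Ring.inverse (1 + θ) + Ring.inverse (1 + θ) * θ) - Ring.inverse (1 + θ) * θ := by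
          rw [h, hκdef]
      _ = Ring.inverse (1 + θ) := by abel
  have hκUnit : IsUnit (1 - κ) := by
    rw [hκ1, ← h1θ.unit_spec, Ring.inverse_unit]
    exact (h1θ.unit⁻¹).isUnit
  have hκinv : Ring.inverse (1 - κ) = 1 + θ := by
    rw [hκ1, ← h1θ.unit_spec, Ring.inverse_unit, Ring.inverse_unit, inv_inv, h1θ.unit_spec]
  have hsuUnit : IsUnit (1 - s * u) := isUnit_one_sub_of_norm_lt_one hsu
  have hθuUnit : IsUnit (1 - θ * u) := isUnit_one_sub_of_norm_lt_one hθu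
  -- factorizations
  have hUu : U = u + 1 := by rw [hudef]; abel
  have hfac1 : (1 - c) * (1 - s * u) = 1 - z * (V * U) := by
    have h : (1 - c) * r = 1 := Ring.mul_inverse_cancel _ hrUnit
    have e : (1 - c) * (1 - s * u) = (1 - c) - ((1 - c) * r) * (c * u) := by
      rw [hsdef]; noncomm_ring
    rw [e, h, one_mul, hUu, hcdef]
    noncomm_ring
  have hfac2 : (1 - κ) * (1 - θ * u) = 1 - κ * U := by
    have hκθ : (1 - κ) * θ = κ := by rw [hκ1, hκdef]
    have e : (1 - κ) * (1 - θ * u) = (1 - κ) - ((1 - κ) * θ) * u := by noncomm_ring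
    rw [e, hκθ, hUu]
    noncomm_ring
  have hVUUnit : IsUnit (1 - z * (V * U)) := hfac1 ▸ hrUnit.mul hsuUnit
  have hκUUnit : IsUnit (1 - κ * U) := hfac2 ▸ hκUnit.mul hθuUnit
  -- inverses
  have hRinv : Ring.inverse (1 - z * (V * U)) = Ring.inverse (1 - s * u) * r := by
    rw [← hfac1, aux_ring_inverse_mul hrUnit hsuUnit, hrdef]
  have hDinv : Ring.inverse (1 - κ * U) = Ring.inverse (1 - θ * u) * (1 + θ) := by
    rw [← hfac2, aux_ring_inverse_mul hκUnit hθuUnit, hκinv]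
  -- thetaTrans as Φ(inverse) - 1
  have hT : ∀ w : A, IsUnit (1 - w) → Φ (Ring.inverse (1 - w) * w) = Φ (Ring.inverse (1 - w)) - 1 := by
    intro w hw
    have h := Ring.inverse_mul_cancel (1 - w) hw
    have e : Ring.inverse (1 - w) * w = Ring.inverse (1 - w) - Ring.inverse (1 - w) * (1 - w) := by
      noncomm_ring
    rw [e, h, map_sub, hΦ1]
  -- memberships
  have hzSV : z ∈ SV := hBV hzB
  have hcSV : c ∈ SV := by rw [hcdef]; exact mul_mem hzSV hVSV
  have hrSV : r ∈ SV := by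
    rw [hrdef]; exact aux_inverse_one_sub_mem SV hSVclosed hcSV hc1
  have hsSV : s ∈ SV := by rw [hsdef]; exact mul_mem hrSV hcSV
  have huSA' : u ∈ SA := huSA
  have hθSA : θ ∈ SA := hBA hθB
  -- the independence reduction hypotheses
  have h01 : (0 : Fin 2) < 1 := by decide
  have hif0 : ∀ {x : A}, x ∈ SA → x ∈
      (if (0 : Fin 2) = 0 then (SA : Set A) else (SV : Set A)) := by
    intro x hx; rw [if_pos rfl]; exact hx
  have hif1 : ∀ {x : A}, x ∈ SV → x ∈
      (if (1 : Fin 2) = 0 then (SA : Set A) else (SV : Set A)) := by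
    intro x hx; rw [if_neg (by decide)]; exact hx
  have hred := ha 0 1 0 h01 h01 u (hif0 huSA') s (hif1 hsSV) u (hif0 huSA')
  obtain ⟨hred1, hred2, -, -⟩ := hred
  have hred1' : ∀ a b : A, Φ (a * (u * (s * (u * b)))) = Φ (a * (u * (θ * (u * b)))) := by
    intro a b
    have h := hred1 a b
    simpa only [mul_assoc, hθdef] using h
  have hred2' : ∀ b : A, Φ (u * (s * (u * b))) = Φ (u * (θ * (u * b))) := by
    intro b
    have h := hred2 b
    simpa only [mul_assoc, hθdef] using h
  -- the inductive reduction
  have P : ∀ n : ℕ, ∀ a y : A,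
      Φ (a * (u * ((s * u) ^ n * y))) = Φ (a * (u * ((θ * u) ^ n * y))) := by
    intro n
    induction n with
    | zero => intro a y; simp only [pow_zero, one_mul]
    | succ n ih =>
        intro a y
        simp only [pow_succ', mul_assoc]
        rw [hred1' a ((s * u) ^ n * y)]
        have h2 := ih (a * u * θ) y
        simpa only [mul_assoc] using h2
  have P0 : ∀ n : ℕ, ∀ y : A,
      Φ (u * ((s * u) ^ n * y)) = Φ (u * ((θ * u) ^ n * y)) := by
    intro n y
    cases n with
    | zero => simp only [pow_zero, one_mul]
    | succ n =>
        simp only [pow_succ', mul_assoc]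
        rw [hred2' ((s * u) ^ n * y)]
        have h2 := P n (u * θ) y
        simpa only [mul_assoc] using h2
  -- values of Φ on r and 1 + θ
  have hr1s : r = 1 + s := by
    have h := Ring.inverse_mul_cancel (1 - c) hrUnit
    rw [← hrdef, mul_sub, mul_one, ← hsdef, sub_eq_iff_eq_add] at h
    exact h
  have hΦr : Φ r = 1 + θ := by
    rw [hr1s, map_add, hΦ1, hθdef]
  have h1θB : (1 : A) + θ ∈ B := add_mem (one_mem B) hθB
  -- termwise identity
  have hofFn : ∀ v : Fin 3 → A, (List.ofFn v).prod = v 0 * (v 1 * v 2) := by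
    intro v
    simp [List.ofFn_succ, mul_assoc]
  have hVsh : VShaped (![1, 0, 1] : Fin 3 → Fin 2) := ⟨1, by decide, by decide⟩
  have hterm : ∀ n : ℕ, Φ ((s * u) ^ n * r) = Φ ((θ * u) ^ n * (1 + θ)) := by
    intro n
    cases n with
    | zero =>
        simp only [pow_zero, one_mul]
        rw [hΦr, hfix _ h1θB]
    | succ n =>
        set M : A := u * (θ * u) ^ n with hMdef
        have hMSA : M ∈ SA := mul_mem huSA' (pow_mem (mul_mem hθSA huSA') n)
        have step1 : Φ ((s * u) ^ (n + 1) * r) = Φ (s * (M * r)) := by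
          have e : (s * u) ^ (n + 1) * r = s * (u * ((s * u) ^ n * r)) := by
            rw [pow_succ']; simp only [mul_assoc]
          rw [e, P n s r, hMdef]
          simp only [mul_assoc]
        have step2 : Φ (s * (M * r)) = Φ s * (Φ M * Φ r) := by
          have hx : ∀ i : Fin 3, (![s, M, r]) i ∈
              (fun t : Fin 2 => if t = 0 then (SA : Set A) else (SV : Set A))
                ((![1, 0, 1] : Fin 3 → Fin 2) i) := by
            intro i
            fin_cases i
            · exact hif1 hsSV
            · exact hif0 hMSA
            · exact hif1 hrSV
          have h := hb 2 ![1, 0, 1] hVsh ![s, M, r] hx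
          rw [hofFn, hofFn] at h
          simpa using h
        have step3 : Φ ((θ * u) ^ (n + 1) * (1 + θ)) = θ * Φ M * (1 + θ) := by
          have e : (θ * u) ^ (n + 1) * (1 + θ) = θ * M * (1 + θ) := by
            rw [pow_succ', hMdef]; simp only [mul_assoc]
          rw [e, hbimod θ hθB (1 + θ) h1θB M]
        rw [step1, step2, step3, hΦr, ← hθdef]
        simp only [mul_assoc]
  -- summability and series
  have hsum1 : Summable fun n : ℕ => (s * u) ^ n := summable_geometric_of_norm_lt_one hsu
  have hsum2 : Summable fun n : ℕ => (θ * u) ^ n := summable_geometric_of_norm_lt_one hθu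
  have key : Φ (Ring.inverse (1 - s * u) * r) = Φ (Ring.inverse (1 - θ * u) * (1 + θ)) := by
    rw [← geom_series_eq_inverse (s * u) hsu, ← geom_series_eq_inverse (θ * u) hθu,
      ← hsum1.tsum_mul_right r, ← hsum2.tsum_mul_right (1 + θ)]
    have e1 : Φ (∑' n : ℕ, (s * u) ^ n * r) = ∑' n : ℕ, Φ ((s * u) ^ n * r) :=
      ContinuousLinearMap.map_tsum Φ' (hsum1.mul_right r)
    have e2 : Φ (∑' n : ℕ, (θ * u) ^ n * (1 + θ)) = ∑' n : ℕ, Φ ((θ * u) ^ n * (1 + θ)) :=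
      ContinuousLinearMap.map_tsum Φ' (hsum2.mul_right (1 + θ))
    rw [e1, e2]
    exact tsum_congr hterm
  -- assemble
  refine ⟨hVUUnit, hrUnit, ?_, ?_, ?_⟩
  · rw [hθtheta]; exact h1θ
  · rw [hκkappa]; exact hκUUnit
  · have lhs : thetaTrans Φ (V * U) z = Φ (Ring.inverse (1 - z * (V * U))) - 1 :=
      hT (z * (V * U)) hVUUnit
    have rhs : thetaTrans Φ U (kappaTrans Φ V z) = Φ (Ring.inverse (1 - κ * U)) - 1 := by
      rw [thetaTrans, hκkappa]
      exact hT (κ * U) hκUUnit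
    rw [lhs, rhs, hRinv, hDinv, key]
end

section
/- Let 𝔄 be a unital C*-algebra, 𝔅 ⊆ 𝔄 a unital C*-subalgebra containing the unit of 𝔄, and Φ : 𝔄 → 𝔅 a positive conditional expectation. Let U, V ∈ 𝔄 be such that U − 1 and V are monotonically independent over 𝔅 (the closed subalgebra generated by {U − 1} ∪ 𝔅 carrying index 1 and that generated by {V} ∪ 𝔅 carrying index 2). For W ∈ 𝔄 and z ∈ 𝔅 small define ϑ_W(z) = Φ((1 − zW)⁻¹ zW) and κ_W(z) = (1 + ϑ_W(z))⁻¹ ϑ_W(z). Then there exists ε > 0 such that for all z ∈ 𝔅 with ‖z‖ < ε all the relevant inverses exist and κ_{VU}(z) = κ_U(κ_V(z)). -/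
open scoped BigOperators

section Aux
variable {A : Type*} [CStarAlgebra A] [PartialOrder A] [StarOrderedRing A]

lemma auxPhiNonneg (Φ : A →ₗ[ℂ] A) (hpos : ∀ a : A, 0 ≤ Φ (star a * a))
    {x : A} (hx : 0 ≤ x) : 0 ≤ Φ x := by
  rw [StarOrderedRing.nonneg_iff] at hx
  induction hx using AddSubmonoid.closure_induction with
  | mem y hy => obtain ⟨s, rfl⟩ := hy; exact hpos s
  | zero => simp
  | add x y _ _ hx hy => rw [map_add]; exact add_nonneg hx hy

lemma auxPhiMono (Φ : A →ₗ[ℂ] A) (hpos : ∀ a : A, 0 ≤ Φ (star a * a))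
    {x y : A} (hxy : x ≤ y) : Φ x ≤ Φ y := by
  have := auxPhiNonneg Φ hpos (sub_nonneg.mpr hxy)
  rw [map_sub] at this
  exact sub_nonneg.mp this

lemma auxPhiReal (Φ : A →ₗ[ℂ] A) (hone : Φ 1 = 1) (r : ℝ) :
    Φ (algebraMap ℝ A r) = algebraMap ℝ A r := by
  rw [IsScalarTower.algebraMap_apply ℝ ℂ A, Algebra.algebraMap_eq_smul_one, map_smul, hone]

lemma auxPhiSA (Φ : A →ₗ[ℂ] A) (hone : Φ 1 = 1) (hpos : ∀ a : A, 0 ≤ Φ (star a * a))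
    {a : A} (ha : IsSelfAdjoint a) : ‖Φ a‖ ≤ 3 * ‖a‖ := by
  nontriviality A
  have h1 : Φ a ≤ algebraMap ℝ A ‖a‖ := by
    have := auxPhiMono Φ hpos (ha.le_algebraMap_norm_self)
    rwa [auxPhiReal Φ hone] at this
  have h2 : (0 : A) ≤ Φ a + algebraMap ℝ A ‖a‖ := by
    have := auxPhiMono Φ hpos (ha.neg_algebraMap_norm_le_self)
    rw [map_neg, auxPhiReal Φ hone] at this
    have h' := sub_nonneg.mpr this
    simpa [sub_neg_eq_add] using h'
  have h3 : Φ a + algebraMap ℝ A ‖a‖ ≤ algebraMap ℝ A ‖a‖ + algebraMap ℝ A ‖a‖ :=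
    add_le_add_left h1 _
  have h4 : ‖Φ a + algebraMap ℝ A ‖a‖‖ ≤ ‖algebraMap ℝ A ‖a‖ + algebraMap ℝ A ‖a‖‖ :=
    CStarAlgebra.norm_le_norm_of_nonneg_of_le h2 h3
  have h5 : ‖algebraMap ℝ A ‖a‖ + algebraMap ℝ A ‖a‖‖ ≤ 2 * ‖a‖ := by
    calc ‖algebraMap ℝ A ‖a‖ + algebraMap ℝ A ‖a‖‖ ≤ ‖algebraMap ℝ A ‖a‖‖ + ‖algebraMap ℝ A ‖a‖‖ :=
          norm_add_le _ _
      _ ≤ 2 * ‖a‖ := by rw [norm_algebraMap']; simp [norm_norm]; linarith [norm_nonneg a]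
  have h6 : ‖algebraMap ℝ A ‖a‖‖ ≤ ‖a‖ := by rw [norm_algebraMap']; simp
  calc ‖Φ a‖ = ‖(Φ a + algebraMap ℝ A ‖a‖) - algebraMap ℝ A ‖a‖‖ := by
        rw [add_sub_cancel_right]
    _ ≤ ‖Φ a + algebraMap ℝ A ‖a‖‖ + ‖algebraMap ℝ A ‖a‖‖ := norm_sub_le _ _
    _ ≤ 2 * ‖a‖ + ‖a‖ := add_le_add (h4.trans h5) h6
    _ = 3 * ‖a‖ := by ring

lemma auxPhiBound (Φ : A →ₗ[ℂ] A) (hone : Φ 1 = 1) (hpos : ∀ a : A, 0 ≤ Φ (star a * a))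
    (a : A) : ‖Φ a‖ ≤ 6 * ‖a‖ := by
  obtain ⟨s, hs⟩ : ∃ s : A, s = (2⁻¹ : ℂ) • (a + star a) := ⟨_, rfl⟩
  obtain ⟨t, ht⟩ : ∃ t : A, t = (-(Complex.I)/2 : ℂ) • (a - star a) := ⟨_, rfl⟩
  have hsa : IsSelfAdjoint s := by
    rw [IsSelfAdjoint, hs, star_smul, star_add, star_star, add_comm (star a) a]
    congr 1
    simp [Complex.ext_iff]
  have hta : IsSelfAdjoint t := by
    rw [IsSelfAdjoint, ht, star_smul, star_sub, star_star, ← neg_sub a (star a), smul_neg,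
      ← neg_smul]
    congr 1
    norm_num [Complex.ext_iff]
  have hast : a = s + Complex.I • t := by
    rw [hs, ht, smul_smul]
    have hI : Complex.I * (-(Complex.I)/2) = 2⁻¹ := by
      norm_num [Complex.ext_iff]
    rw [hI, smul_add, smul_sub]
    module
  have hns : ‖s‖ ≤ ‖a‖ := by
    rw [hs, norm_smul]
    calc ‖(2⁻¹ : ℂ)‖ * ‖a + star a‖ ≤ 2⁻¹ * (‖a‖ + ‖star a‖) := by
          rw [show ‖(2⁻¹ : ℂ)‖ = 2⁻¹ by simp]
          exact mul_le_mul_of_nonneg_left (norm_add_le _ _) (by norm_num)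
      _ = ‖a‖ := by rw [norm_star]; ring
  have hnt : ‖t‖ ≤ ‖a‖ := by
    rw [ht, norm_smul]
    calc ‖(-(Complex.I)/2 : ℂ)‖ * ‖a - star a‖ ≤ 2⁻¹ * (‖a‖ + ‖star a‖) := by
          rw [show ‖(-(Complex.I)/2 : ℂ)‖ = 2⁻¹ by simp]
          exact mul_le_mul_of_nonneg_left (norm_sub_le _ _) (by norm_num)
      _ = ‖a‖ := by rw [norm_star]; ring
  calc ‖Φ a‖ = ‖Φ s + Complex.I • Φ t‖ := by rw [hast, map_add, map_smul]
    _ ≤ ‖Φ s‖ + ‖Complex.I • Φ t‖ := norm_add_le _ _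
    _ = ‖Φ s‖ + ‖Φ t‖ := by rw [norm_smul]; simp
    _ ≤ 3 * ‖a‖ + 3 * ‖a‖ :=
        add_le_add ((auxPhiSA Φ hone hpos hsa).trans (by linarith))
          ((auxPhiSA Φ hone hpos hta).trans (by linarith))
    _ = 6 * ‖a‖ := by ring

end Aux

lemma auxInverseEq {M₀ : Type*} [MonoidWithZero M₀] {a x : M₀} (hu : IsUnit a)
    (h : a * x = 1) : Ring.inverse a = x := by
  obtain ⟨u, rfl⟩ := hu
  rw [Ring.inverse_unit]
  exact Units.inv_eq_of_mul_eq_one_right h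

lemma auxInverseMul {M₀ : Type*} [MonoidWithZero M₀] {a b : M₀} (ha : IsUnit a) (hb : IsUnit b) :
    Ring.inverse (a * b) = Ring.inverse b * Ring.inverse a := by
  obtain ⟨u, rfl⟩ := ha
  obtain ⟨v, rfl⟩ := hb
  rw [← Units.val_mul, Ring.inverse_unit, Ring.inverse_unit, Ring.inverse_unit, mul_inv_rev,
    Units.val_mul]

lemma auxInverseIsUnit {M₀ : Type*} [MonoidWithZero M₀] {a : M₀} (ha : IsUnit a) :
    IsUnit (Ring.inverse a) := by
  obtain ⟨u, rfl⟩ := ha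
  rw [Ring.inverse_unit]
  exact u⁻¹.isUnit

lemma auxInverseInverse {M₀ : Type*} [MonoidWithZero M₀] {a : M₀} (ha : IsUnit a) :
    Ring.inverse (Ring.inverse a) = a := by
  obtain ⟨u, rfl⟩ := ha
  rw [Ring.inverse_unit, Ring.inverse_unit, inv_inv]

lemma auxNormInverse {R : Type*} [NormedRing R] [CompleteSpace R] {t : R}
    (h : ‖t‖ ≤ 2⁻¹) : ‖Ring.inverse (1 - t)‖ ≤ 1 + ‖(1 : R)‖ := by
  have h1 : ‖t‖ < 1 := lt_of_le_of_lt h (by norm_num)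
  rw [← geom_series_eq_inverse t h1]
  calc ‖∑' n : ℕ, t ^ n‖ ≤ ‖(1 : R)‖ - 1 + (1 - ‖t‖)⁻¹ := tsum_geometric_le_of_norm_lt_one t h1
    _ ≤ 1 + ‖(1 : R)‖ := by
        have h2 : (1 - ‖t‖)⁻¹ ≤ 2 := by
          rw [show (2 : ℝ) = (2⁻¹)⁻¹ by norm_num]
          exact inv_anti₀ (by norm_num) (by linarith)
        linarith

set_option maxHeartbeats 4000000

/-- first identity of Theorem 3.4: if `U - 1` and `V` are monotonically
independent over `𝔅`, then `κ_{VU}(z) = κ_U(κ_V(z))` for `z` near `0 ∈ 𝔅`. -/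
theorem kappaTrans_comp {A : Type*} [CStarAlgebra A] [PartialOrder A] [StarOrderedRing A]
    (B : StarSubalgebra ℂ A) (hBclosed : IsClosed (B : Set A))
    (Φ : A →ₗ[ℂ] A)
    (hmem : ∀ x : A, Φ x ∈ B)
    (hfix : ∀ b ∈ B, Φ b = b)
    (hbimod : ∀ b₁ ∈ B, ∀ b₂ ∈ B, ∀ x : A, Φ (b₁ * x * b₂) = b₁ * Φ x * b₂)
    (hpos : ∀ a : A, 0 ≤ Φ (star a * a))
    (U V : A)
    (hindep : MonoIndep (fun x => Φ x)
      (fun t : Fin 2 =>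
        if t = 0 then
          ((Algebra.adjoin ℂ ({U - 1} ∪ (B : Set A))).topologicalClosure : Set A)
        else
          ((Algebra.adjoin ℂ ({V} ∪ (B : Set A))).topologicalClosure : Set A))) :
    ∃ ε > (0 : ℝ), ∀ z ∈ B, ‖z‖ < ε →
      IsUnit (1 - z * (V * U)) ∧ IsUnit (1 - z * V) ∧
      IsUnit (1 + thetaTrans Φ V z) ∧ IsUnit (1 - kappaTrans Φ V z * U) ∧
      IsUnit (1 + thetaTrans Φ (V * U) z) ∧
      IsUnit (1 + thetaTrans Φ U (kappaTrans Φ V z)) ∧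
      kappaTrans Φ (V * U) z = kappaTrans Φ U (kappaTrans Φ V z) := by
  classical
  have hΦ1 : Φ 1 = 1 := hfix 1 B.one_mem
  have hΦbound : ∀ a : A, ‖Φ a‖ ≤ 6 * ‖a‖ := auxPhiBound Φ hΦ1 hpos
  let Φc : A →L[ℂ] A := Φ.mkContinuous 6 hΦbound
  have hΦc : ∀ a, Φc a = Φ a := fun a => rfl
  have hone_le : ‖(1 : A)‖ ≤ 1 := by
    rcases subsingleton_or_nontrivial A with h | h
    · simp [Subsingleton.elim (1 : A) (0 : A)]
    · exact le_of_eq CStarRing.norm_one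
  have hinv2 : ∀ t : A, ‖t‖ ≤ 2⁻¹ → ‖Ring.inverse (1 - t)‖ ≤ 2 := fun t ht =>
    (auxNormInverse ht).trans (by linarith)
  have hleft : ∀ b ∈ B, ∀ x : A, Φ (b * x) = b * Φ x := by
    intro b hb x
    have := hbimod b hb 1 B.one_mem x
    simpa using this
  have hright : ∀ b ∈ B, ∀ x : A, Φ (x * b) = Φ x * b := by
    intro b hb x
    have := hbimod 1 B.one_mem b hb x
    simpa using this
  set X : A := U - 1 with hXdef
  set T0 : Subalgebra ℂ A := (Algebra.adjoin ℂ ({X} ∪ (B : Set A))).topologicalClosure with hT0def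
  set T1 : Subalgebra ℂ A := (Algebra.adjoin ℂ ({V} ∪ (B : Set A))).topologicalClosure with hT1def
  obtain ⟨hia, hib⟩ := hindep
  have hBT0 : ∀ x ∈ B, x ∈ T0 := fun x hx =>
    Subalgebra.le_topologicalClosure _ (Algebra.subset_adjoin (Set.mem_union_right _ hx))
  have hBT1 : ∀ x ∈ B, x ∈ T1 := fun x hx =>
    Subalgebra.le_topologicalClosure _ (Algebra.subset_adjoin (Set.mem_union_right _ hx))
  have hXT0 : X ∈ T0 :=
    Subalgebra.le_topologicalClosure _ (Algebra.subset_adjoin (Set.mem_union_left _ rfl))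
  have hVT1 : V ∈ T1 :=
    Subalgebra.le_topologicalClosure _ (Algebra.subset_adjoin (Set.mem_union_left _ rfl))
  have hT1closed : IsClosed (T1 : Set A) := Subalgebra.isClosed_topologicalClosure _
  -- specialize condition (a)
  have hcondA : ∀ x ∈ T0, ∀ y ∈ T1, ∀ z' ∈ T0, ∀ a c : A,
      Φ (a * x * y * z' * c) = Φ (a * x * Φ y * z' * c) := by
    intro x hx y hy z' hz' a c
    have h := hia 0 1 0 (by decide) (by decide) x (by simpa using hx) y (by simpa using hy)
      z' (by simpa using hz')
    exact h.1 a c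
  -- specialize condition (b)
  have fact2 : ∀ y' ∈ T1, ∀ w ∈ T0, Φ (y' * w) = Φ y' * Φ w := by
    intro y' hy' w hw
    have hv : VShaped (![1, 0] : Fin 2 → Fin 2) := ⟨1, by decide, by decide⟩
    have h := hib 1 ![1, 0] hv ![y', w] ?_
    · simpa [List.ofFn_succ] using h
    · intro r
      fin_cases r
      · simpa using hy'
      · simpa using hw
  have fact3 : ∀ y' ∈ T1, ∀ w ∈ T0, ∀ y'' ∈ T1, Φ (y' * w * y'') = Φ y' * Φ w * Φ y'' := by
    intro y' hy' w hw y'' hy''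
    have hv : VShaped (![1, 0, 1] : Fin 3 → Fin 2) := ⟨1, by decide, by decide⟩
    have h := hib 2 ![1, 0, 1] hv ![y', w, y''] ?_
    · simpa [List.ofFn_succ, mul_assoc] using h
    · intro r
      fin_cases r
      · simpa using hy'
      · simpa using hw
      · simpa using hy''
  refine ⟨((1000:ℝ) * ((‖V‖ + 1) * (‖U‖ + 1) * (‖X‖ + 1) ^ 2))⁻¹, by positivity, ?_⟩
  intro z hzB hz
  have hD : (0:ℝ) < (‖V‖ + 1) * (‖U‖ + 1) * (‖X‖ + 1) ^ 2 := by positivity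
  have key : ‖z‖ * ((‖V‖ + 1) * (‖U‖ + 1) * (‖X‖ + 1) ^ 2) < 1/1000 := by
    calc ‖z‖ * ((‖V‖ + 1) * (‖U‖ + 1) * (‖X‖ + 1) ^ 2)
        < ((1000:ℝ) * ((‖V‖ + 1) * (‖U‖ + 1) * (‖X‖ + 1) ^ 2))⁻¹ *
          ((‖V‖ + 1) * (‖U‖ + 1) * (‖X‖ + 1) ^ 2) := mul_lt_mul_of_pos_right hz hD
      _ = 1/1000 := by field_simp
  have hnV := norm_nonneg V
  have hnU := norm_nonneg U
  have hnX := norm_nonneg X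
  have hnz := norm_nonneg z
  have hstep : ∀ q : ℝ, 0 ≤ q → q ≤ (‖V‖ + 1) * (‖U‖ + 1) * (‖X‖ + 1) ^ 2 →
      ‖z‖ * q < 1/1000 := by
    intro q hq hqD
    calc ‖z‖ * q ≤ ‖z‖ * ((‖V‖ + 1) * (‖U‖ + 1) * (‖X‖ + 1) ^ 2) :=
          mul_le_mul_of_nonneg_left hqD hnz
      _ < 1/1000 := key
  have hp2 : (1:ℝ) ≤ (‖X‖ + 1) ^ 2 := by nlinarith
  have hq2' : (‖V‖ + 1) * (‖U‖ + 1) ≤ (‖V‖ + 1) * (‖U‖ + 1) * (‖X‖ + 1) ^ 2 :=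
    le_mul_of_one_le_right (by positivity) hp2
  have k1 : ‖z‖ * ‖V‖ < 1/1000 := by
    refine hstep _ hnV (le_trans ?_ hq2')
    nlinarith
  have k2 : ‖z‖ * (‖V‖ * ‖U‖) < 1/1000 := by
    refine hstep _ (mul_nonneg hnV hnU) (le_trans ?_ hq2')
    nlinarith
  have k3 : ‖z‖ * (‖V‖ * ‖X‖) < 1/1000 := by
    refine hstep _ (mul_nonneg hnV hnX) ?_
    have h1 : ‖V‖ * ‖X‖ ≤ (‖V‖ + 1) * (‖X‖ + 1) ^ 2 := by
      nlinarith [mul_nonneg hnV (sq_nonneg ‖X‖), mul_nonneg hnV hnX, sq_nonneg ‖X‖]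
    have h2 : (‖V‖ + 1) * (‖X‖ + 1) ^ 2 ≤ (‖V‖ + 1) * (‖U‖ + 1) * (‖X‖ + 1) ^ 2 := by
      nlinarith [mul_nonneg (mul_nonneg (by linarith : (0:ℝ) ≤ ‖V‖ + 1) hnU)
        (sq_nonneg (‖X‖ + 1))]
    linarith
  -- basic norm facts about z*V
  have hzVn : ‖z * V‖ ≤ ‖z‖ * ‖V‖ := norm_mul_le _ _
  have hzVhalf : ‖z * V‖ ≤ 2⁻¹ := by linarith
  have hzV1 : ‖z * V‖ < 1 := by linarith
  have hu1 : IsUnit (1 - z * V) := isUnit_one_sub_of_norm_lt_one hzV1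
  set Y : A := Ring.inverse (1 - z * V) * (z * V) with hYdef
  have hYn : ‖Y‖ ≤ 2 * (‖z‖ * ‖V‖) := by
    calc ‖Y‖ ≤ ‖Ring.inverse (1 - z * V)‖ * ‖z * V‖ := norm_mul_le _ _
      _ ≤ 2 * (‖z‖ * ‖V‖) := mul_le_mul (hinv2 _ hzVhalf) hzVn (norm_nonneg _) (by norm_num)
  have hzVT1 : z * V ∈ T1 := mul_mem (hBT1 z hzB) hVT1
  have hYmem : Y ∈ T1 := by
    refine mul_mem ?_ hzVT1
    rw [← geom_series_eq_inverse _ hzV1]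
    refine hT1closed.mem_of_tendsto
      ((summable_geometric_of_norm_lt_one hzV1).hasSum.tendsto_sum_nat)
      (Filter.Eventually.of_forall fun n => ?_)
    exact sum_mem (fun i _ => pow_mem hzVT1 i)
  have hG1 : Ring.inverse (1 - z * V) = 1 + Y := by
    refine auxInverseEq hu1 ?_
    have hc : (1 - z * V) * Ring.inverse (1 - z * V) = 1 := Ring.mul_inverse_cancel _ hu1
    calc (1 - z * V) * (1 + Y)
        = (1 - z * V) + (1 - z * V) * Ring.inverse (1 - z * V) * (z * V) := by
          rw [hYdef]; noncomm_ring
      _ = (1 - z * V) + 1 * (z * V) := by rw [hc]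
      _ = 1 := by noncomm_ring
  set b : A := Φ Y with hbdef
  have hbB : b ∈ B := hmem Y
  have hbT0 : b ∈ T0 := hBT0 _ hbB
  have hbn : ‖b‖ ≤ 12 * (‖z‖ * ‖V‖) := by
    calc ‖b‖ ≤ 6 * ‖Y‖ := hΦbound Y
      _ ≤ 12 * (‖z‖ * ‖V‖) := by linarith
  have hb1 : ‖b‖ < 1 := by linarith
  have hYXn : ‖Y * X‖ < 1 := by
    calc ‖Y * X‖ ≤ ‖Y‖ * ‖X‖ := norm_mul_le _ _
      _ ≤ 2 * (‖z‖ * ‖V‖) * ‖X‖ := mul_le_mul_of_nonneg_right hYn hnX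
      _ = 2 * (‖z‖ * (‖V‖ * ‖X‖)) := by ring
      _ < 1 := by linarith
  have huYX : IsUnit (1 - Y * X) := isUnit_one_sub_of_norm_lt_one hYXn
  have hbXhalf : ‖b * X‖ ≤ 2⁻¹ := by
    calc ‖b * X‖ ≤ ‖b‖ * ‖X‖ := norm_mul_le _ _
      _ ≤ 12 * (‖z‖ * ‖V‖) * ‖X‖ := mul_le_mul_of_nonneg_right hbn hnX
      _ = 12 * (‖z‖ * (‖V‖ * ‖X‖)) := by ring
      _ ≤ 2⁻¹ := by linarith
  have hbX1 : ‖b * X‖ < 1 := lt_of_le_of_lt hbXhalf (by norm_num)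
  have hubX : IsUnit (1 - b * X) := isUnit_one_sub_of_norm_lt_one hbX1
  set Q : A := Φ (X * Ring.inverse (1 - b * X)) with hQdef
  have hQn : ‖Q‖ ≤ 12 * ‖X‖ := by
    calc ‖Q‖ ≤ 6 * ‖X * Ring.inverse (1 - b * X)‖ := hΦbound _
      _ ≤ 6 * (‖X‖ * ‖Ring.inverse (1 - b * X)‖) :=
          mul_le_mul_of_nonneg_left (norm_mul_le _ _) (by norm_num)
      _ ≤ 6 * (‖X‖ * 2) := by
          have := hinv2 _ hbXhalf
          have := mul_le_mul_of_nonneg_left this hnX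
          linarith
      _ = 12 * ‖X‖ := by ring
  have hbQ1 : ‖b * Q‖ < 1 := by
    calc ‖b * Q‖ ≤ ‖b‖ * ‖Q‖ := norm_mul_le _ _
      _ ≤ 12 * (‖z‖ * ‖V‖) * (12 * ‖X‖) :=
          mul_le_mul hbn hQn (norm_nonneg _) (by positivity)
      _ = 144 * (‖z‖ * (‖V‖ * ‖X‖)) := by ring
      _ < 1 := by linarith
  have hu1b : IsUnit (1 + b) := by
    rw [show (1 : A) + b = 1 - (-b) by rw [sub_neg_eq_add]]
    exact isUnit_one_sub_of_norm_lt_one (by simpa using hb1)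
  have hu1bQ : IsUnit (1 + b * Q) := by
    rw [show (1 : A) + b * Q = 1 - (-(b * Q)) by rw [sub_neg_eq_add]]
    exact isUnit_one_sub_of_norm_lt_one (by simpa using hbQ1)
  -- independence inductions
  have hcontract : ∀ w ∈ T0, ∀ c : A, Φ (Y * w * Y * X * c) = Φ (Y * w * b * X * c) := by
    intro w hw c
    have h := hcondA w hw Y hYmem X hXT0 Y c
    rw [← hbdef] at h
    exact h
  have L : ∀ n : ℕ, ∀ w ∈ T0, Φ (Y * w * (Y * X) ^ n) = b * Φ (w * (b * X) ^ n) := by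
    intro n
    induction n with
    | zero =>
      intro w hw
      simp only [pow_zero, mul_one]
      rw [fact2 Y hYmem w hw, ← hbdef]
    | succ n ih =>
      intro w hw
      have e1 : Y * w * (Y * X) ^ (n + 1) = Y * w * Y * X * (Y * X) ^ n := by
        rw [pow_succ']; noncomm_ring
      rw [e1, hcontract w hw ((Y * X) ^ n)]
      have e2 : Y * w * b * X * (Y * X) ^ n = Y * (w * b * X) * (Y * X) ^ n := by
        noncomm_ring
      rw [e2, ih (w * b * X) (mul_mem (mul_mem hw hbT0) hXT0)]
      have e3 : w * b * X * (b * X) ^ n = w * (b * X) ^ (n + 1) := by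
        rw [pow_succ']; noncomm_ring
      rw [e3]
  have M : ∀ n : ℕ, ∀ w ∈ T0, Φ (Y * w * (Y * X) ^ n * Y) = b * Φ (w * (b * X) ^ n) * b := by
    intro n
    induction n with
    | zero =>
      intro w hw
      simp only [pow_zero, mul_one]
      rw [fact3 Y hYmem w hw Y hYmem, ← hbdef]
    | succ n ih =>
      intro w hw
      have e1 : Y * w * (Y * X) ^ (n + 1) * Y = Y * w * Y * X * ((Y * X) ^ n * Y) := by
        rw [pow_succ']; noncomm_ring
      rw [e1, hcontract w hw ((Y * X) ^ n * Y)]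
      have e2 : Y * w * b * X * ((Y * X) ^ n * Y) = Y * (w * b * X) * (Y * X) ^ n * Y := by
        noncomm_ring
      rw [e2, ih (w * b * X) (mul_mem (mul_mem hw hbT0) hXT0)]
      have e3 : w * b * X * (b * X) ^ n = w * (b * X) ^ (n + 1) := by
        rw [pow_succ']; noncomm_ring
      rw [e3]
  have C1 : ∀ n : ℕ, Φ ((Y * X) ^ (n + 1)) = b * Φ (X * (b * X) ^ n) := by
    intro n
    have h := L n X hXT0
    rwa [show Y * X * (Y * X) ^ n = (Y * X) ^ (n + 1) by rw [pow_succ']] at h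
  have C2 : ∀ n : ℕ, Φ ((Y * X) ^ (n + 1) * Y) = b * Φ (X * (b * X) ^ n) * b := by
    intro n
    have h := M n X hXT0
    rwa [show Y * X * (Y * X) ^ n = (Y * X) ^ (n + 1) by rw [pow_succ']] at h
  -- summability
  have sumYX : Summable (fun n : ℕ => (Y * X) ^ n) := summable_geometric_of_norm_lt_one hYXn
  have sumbX : Summable (fun n : ℕ => (b * X) ^ n) := summable_geometric_of_norm_lt_one hbX1
  have sumXbX : Summable (fun n : ℕ => X * (b * X) ^ n) := sumbX.mul_left X
  have sumYXY : Summable (fun n : ℕ => (Y * X) ^ n * Y) := sumYX.mul_right Y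
  have sΦYX : Summable (fun n : ℕ => Φ ((Y * X) ^ n)) := sumYX.map Φc Φc.continuous
  have sΦYXY : Summable (fun n : ℕ => Φ ((Y * X) ^ n * Y)) := sumYXY.map Φc Φc.continuous
  have sΦXbX : Summable (fun n : ℕ => Φ (X * (b * X) ^ n)) := sumXbX.map Φc Φc.continuous
  have sΦbX : Summable (fun n : ℕ => Φ ((b * X) ^ n)) := sumbX.map Φc Φc.continuous
  have hsum2 : ∑' n : ℕ, Φ (X * (b * X) ^ n) = Q := by
    have h1 : ∑' n : ℕ, X * (b * X) ^ n = X * Ring.inverse (1 - b * X) := by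
      rw [sumbX.tsum_mul_left X, geom_series_eq_inverse _ hbX1]
    calc ∑' n : ℕ, Φ (X * (b * X) ^ n) = Φ (∑' n : ℕ, X * (b * X) ^ n) :=
          (Φc.map_tsum sumXbX).symm
      _ = Q := by rw [h1, hQdef]
  have hA1 : Φ (Ring.inverse (1 - Y * X)) = 1 + b * Q := by
    have hmap : Φ (Ring.inverse (1 - Y * X)) = ∑' n : ℕ, Φ ((Y * X) ^ n) := by
      rw [← geom_series_eq_inverse _ hYXn]
      exact Φc.map_tsum sumYX
    have htail : ∑' n : ℕ, Φ ((Y * X) ^ (n + 1)) = b * Q := by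
      calc ∑' n : ℕ, Φ ((Y * X) ^ (n + 1)) = ∑' n : ℕ, b * Φ (X * (b * X) ^ n) := tsum_congr C1
        _ = b * ∑' n : ℕ, Φ (X * (b * X) ^ n) := sΦXbX.tsum_mul_left b
        _ = b * Q := by rw [hsum2]
    rw [hmap, Summable.tsum_eq_zero_add sΦYX, htail, pow_zero, hΦ1]
  have hA2 : Φ (Ring.inverse (1 - Y * X) * Y) = b + b * Q * b := by
    have h0 : Ring.inverse (1 - Y * X) * Y = ∑' n : ℕ, (Y * X) ^ n * Y := by
      rw [← geom_series_eq_inverse _ hYXn]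
      exact (sumYX.tsum_mul_right Y).symm
    have htail2 : ∑' n : ℕ, Φ ((Y * X) ^ (n + 1) * Y) = b * Q * b := by
      calc ∑' n : ℕ, Φ ((Y * X) ^ (n + 1) * Y) = ∑' n : ℕ, b * Φ (X * (b * X) ^ n) * b :=
            tsum_congr C2
        _ = (∑' n : ℕ, b * Φ (X * (b * X) ^ n)) * b := (sΦXbX.mul_left b).tsum_mul_right b
        _ = (b * ∑' n : ℕ, Φ (X * (b * X) ^ n)) * b := by rw [sΦXbX.tsum_mul_left b]
        _ = b * Q * b := by rw [hsum2]
    have hz0 : Φ ((Y * X) ^ 0 * Y) = b := by rw [pow_zero, one_mul, hbdef]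
    have hmap2 : Φ (Ring.inverse (1 - Y * X) * Y) = ∑' n : ℕ, Φ ((Y * X) ^ n * Y) := by
      rw [h0]; exact Φc.map_tsum sumYXY
    rw [hmap2, Summable.tsum_eq_zero_add sΦYXY, hz0, htail2]
  have hA3 : Φ (Ring.inverse (1 - b * X)) = 1 + b * Q := by
    have hmap : Φ (Ring.inverse (1 - b * X)) = ∑' n : ℕ, Φ ((b * X) ^ n) := by
      rw [← geom_series_eq_inverse _ hbX1]
      exact Φc.map_tsum sumbX
    have hterm : ∀ n : ℕ, Φ ((b * X) ^ (n + 1)) = b * Φ (X * (b * X) ^ n) := by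
      intro n
      have e : (b * X) ^ (n + 1) = b * (X * (b * X) ^ n) := by rw [pow_succ', mul_assoc]
      rw [e, hleft b hbB]
    have htail3 : ∑' n : ℕ, Φ ((b * X) ^ (n + 1)) = b * Q := by
      calc ∑' n : ℕ, Φ ((b * X) ^ (n + 1)) = ∑' n : ℕ, b * Φ (X * (b * X) ^ n) :=
            tsum_congr hterm
        _ = b * ∑' n : ℕ, Φ (X * (b * X) ^ n) := sΦXbX.tsum_mul_left b
        _ = b * Q := by rw [hsum2]
    rw [hmap, Summable.tsum_eq_zero_add sΦbX, htail3, pow_zero, hΦ1]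
  -- key factorization
  have hfac : (1 - z * V) * (1 - Y * X) = 1 - z * (V * U) := by
    have h1 : (1 - z * V) * Y = z * V := by
      rw [hYdef, ← mul_assoc, Ring.mul_inverse_cancel _ hu1, one_mul]
    calc (1 - z * V) * (1 - Y * X) = (1 - z * V) - (1 - z * V) * Y * X := by noncomm_ring
      _ = (1 - z * V) - (z * V) * X := by rw [h1]
      _ = 1 - z * (V * U) := by rw [hXdef]; noncomm_ring
  have huVU : IsUnit (1 - z * (V * U)) := by rw [← hfac]; exact hu1.mul huYX
  have hKE : Φ (Ring.inverse (1 - z * (V * U))) = (1 + b * Q) * (1 + b) := by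
    rw [← hfac, auxInverseMul hu1 huYX, hG1, mul_add, mul_one, map_add, hA1, hA2]
    noncomm_ring
  -- the w side
  have hθV : thetaTrans Φ V z = b := by
    show Φ (Ring.inverse (1 - z * V) * (z * V)) = b
    rw [← hYdef, hbdef]
  have hκV : kappaTrans Φ V z = Ring.inverse (1 + b) * b := by
    show Ring.inverse (1 + thetaTrans Φ V z) * thetaTrans Φ V z = _
    rw [hθV]
  have hbw : (1 + b) * (Ring.inverse (1 + b) * b) = b := by
    rw [← mul_assoc, Ring.mul_inverse_cancel _ hu1b, one_mul]
  have hE3 : (1 + b) * (1 - kappaTrans Φ V z * U) = 1 - b * X := by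
    rw [hκV]
    calc (1 + b) * (1 - Ring.inverse (1 + b) * b * U)
        = (1 + b) - (1 + b) * (Ring.inverse (1 + b) * b) * U := by noncomm_ring
      _ = (1 + b) - b * U := by rw [hbw]
      _ = 1 - b * X := by rw [hXdef]; noncomm_ring
  have hE3' : 1 - kappaTrans Φ V z * U = Ring.inverse (1 + b) * (1 - b * X) := by
    have h := congrArg (fun t => Ring.inverse (1 + b) * t) hE3
    rwa [← mul_assoc, Ring.inverse_mul_cancel _ hu1b, one_mul] at h
  have huwU : IsUnit (1 - kappaTrans Φ V z * U) := by
    rw [hE3']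
    exact (auxInverseIsUnit hu1b).mul hubX
  have hinvwU : Ring.inverse (1 - kappaTrans Φ V z * U) = Ring.inverse (1 - b * X) * (1 + b) := by
    rw [hE3', auxInverseMul (auxInverseIsUnit hu1b) hubX, auxInverseInverse hu1b]
  have hKE2 : Φ (Ring.inverse (1 - kappaTrans Φ V z * U)) = (1 + b * Q) * (1 + b) := by
    rw [hinvwU, hright (1 + b) (add_mem B.one_mem hbB) (Ring.inverse (1 - b * X)), hA3]
  -- theta computations
  have hθVU : thetaTrans Φ (V * U) z = (1 + b * Q) * (1 + b) - 1 := by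
    show Φ (Ring.inverse (1 - z * (V * U)) * (z * (V * U))) = _
    have h2 : Ring.inverse (1 - z * (V * U)) * (1 - z * (V * U)) = 1 :=
      Ring.inverse_mul_cancel _ huVU
    have h1 : Ring.inverse (1 - z * (V * U)) * (z * (V * U))
        = Ring.inverse (1 - z * (V * U)) - 1 := by
      calc Ring.inverse (1 - z * (V * U)) * (z * (V * U))
          = Ring.inverse (1 - z * (V * U)) -
            Ring.inverse (1 - z * (V * U)) * (1 - z * (V * U)) := by noncomm_ring
        _ = Ring.inverse (1 - z * (V * U)) - 1 := by rw [h2]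
    rw [h1, map_sub, hΦ1, hKE]
  have hθU : thetaTrans Φ U (kappaTrans Φ V z) = (1 + b * Q) * (1 + b) - 1 := by
    show Φ (Ring.inverse (1 - kappaTrans Φ V z * U) * (kappaTrans Φ V z * U)) = _
    have h2 : Ring.inverse (1 - kappaTrans Φ V z * U) * (1 - kappaTrans Φ V z * U) = 1 :=
      Ring.inverse_mul_cancel _ huwU
    have h1 : Ring.inverse (1 - kappaTrans Φ V z * U) * (kappaTrans Φ V z * U)
        = Ring.inverse (1 - kappaTrans Φ V z * U) - 1 := by
      calc Ring.inverse (1 - kappaTrans Φ V z * U) * (kappaTrans Φ V z * U)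
          = Ring.inverse (1 - kappaTrans Φ V z * U) -
            Ring.inverse (1 - kappaTrans Φ V z * U) * (1 - kappaTrans Φ V z * U) := by
              noncomm_ring
        _ = Ring.inverse (1 - kappaTrans Φ V z * U) - 1 := by rw [h2]
    rw [h1, map_sub, hΦ1, hKE2]
  have hPadd : (1 : A) + ((1 + b * Q) * (1 + b) - 1) = (1 + b * Q) * (1 + b) := by abel
  have hPunit : IsUnit ((1 + b * Q) * (1 + b)) := hu1bQ.mul hu1b
  refine ⟨huVU, hu1, ?_, huwU, ?_, ?_, ?_⟩
  · rw [hθV]; exact hu1b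
  · rw [hθVU, hPadd]; exact hPunit
  · rw [hθU, hPadd]; exact hPunit
  · show Ring.inverse (1 + thetaTrans Φ (V * U) z) * thetaTrans Φ (V * U) z
      = Ring.inverse (1 + thetaTrans Φ U (kappaTrans Φ V z)) * thetaTrans Φ U (kappaTrans Φ V z)
    rw [hθVU, hθU]
end

section
/- Let 𝔄 be a complex algebra, 𝔅 ⊆ 𝔄 a subalgebra, and Φ : 𝔄 → 𝔅 a conditional expectation. Let X, Y ∈ 𝔄 be such that the subalgebra generated by {X} ∪ 𝔅 (index 1) and the subalgebra generated by {Y} ∪ 𝔅 (index 2) are monotonically independent over 𝔅. For W ∈ 𝔄 define 𝔥^W_1(b) = b and, for r ≥ 2, 𝔥^W_r(c₁,…,c_r) = Φ(c₁ W c₂ W ⋯ c_{r−1} W c_r). Then for every n ≥ 2 and all b₁,…,bₙ ∈ 𝔅: Φ(b₁ (X+Y) b₂ (X+Y) ⋯ b_{n−1} (X+Y) bₙ) = Σ_{k=1}^{n} Σ_{p₁+⋯+p_k = n, p_j ≥ 1} 𝔥^X_k( 𝔥^Y_{p₁}(b₁,…,b_{p₁}), 𝔥^Y_{p₂}(b_{q₂+1},…,b_{q₂+p₂}),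 …, 𝔥^Y_{p_k}(b_{q_k+1},…,bₙ) ), where q_j = p₁ + ⋯ + p_{j−1}. -/
open scoped BigOperators

/-- The word `c₁ W c₂ W ⋯ c_{r-1} W c_r` built from a list `[c₁, …, c_r]`;
applying `Φ` to it gives the multilinear moment `𝔥^W_r(c₁, …, c_r)`
(for `r = 1` and `c₁ ∈ 𝔅` one recovers `𝔥^W_1(c) = c` since `Φ(c) = c`). -/
def mWord {A : Type*} [Ring A] (W : A) : List A → A
  | [] => 1
  | c :: cs => c * (cs.map fun d => W * d).prod

section MWordLemmas

variable {A : Type*} [Ring A]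

@[simp] lemma mWord_nil (W : A) : mWord W [] = 1 := rfl

@[simp] lemma mWord_cons (W c : A) (cs : List A) :
    mWord W (c :: cs) = c * (cs.map fun d => W * d).prod := rfl

@[simp] lemma mWord_singleton (W a : A) : mWord W [a] = a := by
  simp [mWord]

lemma mWord_cons_cons (W a x : A) (xs : List A) :
    mWord W (a :: x :: xs) = a * W * mWord W (x :: xs) := by
  simp [mWord, mul_assoc]

lemma mWord_mul_cons (W x a : A) (l : List A) :
    mWord W ((x * a) :: l) = x * mWord W (a :: l) := by
  simp [mWord, mul_assoc]

end MWordLemmas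

section CompositionLemmas

lemma headI_add_tail_sum (l : List ℕ) : l.headI + l.tail.sum = l.sum := by
  cases l <;> simp

lemma comp_blocks_ne_nil {n : ℕ} (hn : 1 ≤ n) (c : Composition n) : c.blocks ≠ [] := by
  intro h
  have hs := c.blocks_sum
  rw [h] at hs
  simp at hs
  omega

lemma comp_blocks_cons {n : ℕ} (hn : 1 ≤ n) (c : Composition n) :
    ∃ p t, c.blocks = p :: t := by
  rcases h : c.blocks with _ | ⟨p, t⟩
  · exact absurd h (comp_blocks_ne_nil hn c)
  · exact ⟨p, t, rfl⟩

lemma comp_headI_pos {n : ℕ} (hn : 1 ≤ n) (c : Composition n) : 0 < c.blocks.headI := by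
  obtain ⟨p, t, h⟩ := comp_blocks_cons hn c
  rw [h]
  exact c.blocks_pos (by rw [h]; exact List.mem_cons_self)

def consOneC {n : ℕ} (c : Composition n) : Composition (n + 1) :=
  ⟨1 :: c.blocks, by
    intro i hi
    rcases List.mem_cons.1 hi with h | h
    · omega
    · exact c.blocks_pos h, by
    simp [c.blocks_sum, Nat.add_comm]⟩

def growFirstC {n : ℕ} (c : Composition n) : Composition (n + 1) :=
  ⟨(c.blocks.headI + 1) :: c.blocks.tail, by
    intro i hi
    rcases List.mem_cons.1 hi with h | h
    · omega
    · exact c.blocks_pos (List.mem_of_mem_tail h), by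
    have h1 := headI_add_tail_sum c.blocks
    have h2 := c.blocks_sum
    simp only [List.sum_cons]
    omega⟩

lemma headI_cons_tail_nat (l : List ℕ) (h : l ≠ []) : l.headI :: l.tail = l := by
  cases l
  · exact absurd rfl h
  · rfl

lemma sum_composition_succ {M : Type*} [AddCommMonoid M] {n : ℕ} (hn : 1 ≤ n)
    (f : Composition (n + 1) → M) :
    ∑ c : Composition (n + 1), f c
      = (∑ c : Composition n, f (consOneC c)) + ∑ c : Composition n, f (growFirstC c) := by
  have hinj : Function.Injective (Sum.elim consOneC (growFirstC (n := n))) := by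
    intro s t h
    rcases s with s | s <;> rcases t with t | t <;>
      simp only [Sum.elim_inl, Sum.elim_inr] at h <;>
      have hb := congrArg Composition.blocks h
    · simp only [consOneC, List.cons.injEq] at hb
      exact congrArg Sum.inl (Composition.ext hb.2)
    · exfalso
      simp only [consOneC, growFirstC, List.cons.injEq] at hb
      have := comp_headI_pos hn t
      omega
    · exfalso
      simp only [consOneC, growFirstC, List.cons.injEq] at hb
      have := comp_headI_pos hn s
      omega
    · simp only [growFirstC, List.cons.injEq] at hb
      have hs := headI_cons_tail_nat s.blocks (comp_blocks_ne_nil hn s)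
      have ht := headI_cons_tail_nat t.blocks (comp_blocks_ne_nil hn t)
      have : s.blocks = t.blocks := by
        rw [← hs, ← ht, hb.2]
        congr 1
        omega
      exact congrArg Sum.inr (Composition.ext this)
  have hsurj : Function.Surjective (Sum.elim consOneC (growFirstC (n := n))) := by
    intro d
    obtain ⟨q, t, hqt⟩ := comp_blocks_cons (by omega) d
    have hq : 0 < q := d.blocks_pos (hqt ▸ List.mem_cons_self)
    have hsum : q + t.sum = n + 1 := by
      have hs := d.blocks_sum
      rw [hqt] at hs
      simpa using hs
    have htpos : ∀ {i}, i ∈ t → 0 < i := fun h' =>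
      d.blocks_pos (hqt ▸ List.mem_cons_of_mem _ h')
    rcases Nat.lt_or_ge q 2 with h1 | h1
    · refine ⟨Sum.inl ⟨t, htpos, by omega⟩, ?_⟩
      apply Composition.ext
      show 1 :: t = d.blocks
      rw [hqt]
      congr 1
      omega
    · refine ⟨Sum.inr ⟨(q - 1) :: t, ?_, ?_⟩, ?_⟩
      · intro i hi
        rcases List.mem_cons.1 hi with h | h
        · omega
        · exact htpos h
      · simp only [List.sum_cons]; omega
      · apply Composition.ext
        show (((q - 1) :: t).headI + 1) :: ((q - 1) :: t).tail = d.blocks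
        rw [hqt]
        simp only [List.headI, List.tail_cons]
        congr 1
        omega
  calc ∑ c : Composition (n + 1), f c
      = ∑ s : Composition n ⊕ Composition n, f (Sum.elim consOneC growFirstC s) :=
        (Fintype.sum_bijective _ ⟨hinj, hsurj⟩ _ f (fun _ => rfl)).symm
    _ = _ := by rw [Fintype.sum_sum_type]; simp only [Sum.elim_inl, Sum.elim_inr]

lemma splitWrt_consOneC {α : Type*} (a : α) (l : List α) {n : ℕ} (c : Composition n) :
    (a :: l).splitWrtComposition (consOneC c) = [a] :: l.splitWrtComposition c := by
  simp [List.splitWrtComposition, consOneC, List.splitWrtCompositionAux_cons]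

lemma splitWrt_growFirstC {α : Type*} (a : α) (l : List α) {n : ℕ} (hn : 1 ≤ n)
    (c : Composition n) :
    (a :: l).splitWrtComposition (growFirstC c)
      = (a :: (l.splitWrtComposition c).headI) :: (l.splitWrtComposition c).tail := by
  obtain ⟨p, t, hpt⟩ := comp_blocks_cons hn c
  simp [List.splitWrtComposition, growFirstC, hpt, List.splitWrtCompositionAux_cons]

end CompositionLemmas

section Expand

variable {A : Type*} [Ring A]

lemma expand_word (X Y : A) (l : List A) (a : A) :
    mWord (X + Y) (a :: l)
      = ∑ c : Composition (l.length + 1),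
          mWord X (((a :: l).splitWrtComposition c).map (mWord Y)) := by
  induction l generalizing a with
  | nil =>
      show mWord (X + Y) [a]
        = ∑ c : Composition 1, mWord X ((([a]).splitWrtComposition c).map (mWord Y))
      have hone : ∀ c : Composition 1, c.blocks = [1] := by
        intro c
        obtain ⟨p, t, h⟩ := comp_blocks_cons le_rfl c
        have hp : 0 < p := c.blocks_pos (by rw [h]; exact List.mem_cons_self)
        have hsum := c.blocks_sum
        rw [h] at hsum
        simp only [List.sum_cons] at hsum
        have hp1 : p = 1 := by
          rcases t with _ | ⟨x, t'⟩
          · simpa using hsum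
          · have hx : 0 < x := c.blocks_pos
              (by rw [h]; exact List.mem_cons_of_mem _ (List.mem_cons_self))
            simp only [List.sum_cons] at hsum
            omega
        have ht : t = [] := by
          rcases t with _ | ⟨x, t'⟩
          · rfl
          · exfalso
            have hx : 0 < x := c.blocks_pos
              (by rw [h]; exact List.mem_cons_of_mem _ (List.mem_cons_self))
            simp only [List.sum_cons] at hsum
            omega
        rw [h, hp1, ht]
      have hcard : Fintype.card (Composition 1) = 1 := by
        rw [composition_card]; norm_num
      have hval : ∀ c : Composition 1,
          mWord (A := A) X ((([a]).splitWrtComposition c).map (mWord Y)) = a := by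
        intro c
        have hs : ([a]).splitWrtComposition c = [[a]] := by
          simp [List.splitWrtComposition, hone c, List.splitWrtCompositionAux_cons, List.splitWrtCompositionAux]
        rw [hs]
        simp
      rw [Finset.sum_congr rfl fun c _ => hval c]
      simp [Finset.sum_const, Finset.card_univ, hcard]
  | cons a' l' ih =>
      have hn1 : 1 ≤ l'.length + 1 := by omega
      have hrhs : (∑ c : Composition ((a' :: l').length + 1),
            mWord X (((a :: a' :: l').splitWrtComposition c).map (mWord Y)))
          = (∑ c : Composition (l'.length + 1),
              mWord X (((a :: a' :: l').splitWrtComposition (consOneC c)).map (mWord Y)))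
            + ∑ c : Composition (l'.length + 1),
              mWord X (((a :: a' :: l').splitWrtComposition (growFirstC c)).map (mWord Y)) :=
        sum_composition_succ hn1 _
      rw [mWord_cons_cons, ih a', hrhs, mul_add a X Y, add_mul, Finset.mul_sum, Finset.mul_sum]
      congr 1
      · apply Finset.sum_congr rfl
        intro c _
        have hsp : (a' :: l').splitWrtComposition c ≠ [] := by
          apply List.ne_nil_of_length_pos
          rw [List.length_splitWrtComposition]
          exact c.length_pos_of_pos (by omega)
        obtain ⟨q, qs, hq⟩ := List.exists_cons_of_ne_nil hsp
        rw [splitWrt_consOneC, hq]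
        simp only [List.map_cons, mWord_singleton]
        exact (mWord_cons_cons X a _ _).symm
      · apply Finset.sum_congr rfl
        intro c _
        have hsp : (a' :: l').splitWrtComposition c ≠ [] := by
          apply List.ne_nil_of_length_pos
          rw [List.length_splitWrtComposition]
          exact c.length_pos_of_pos (by omega)
        obtain ⟨q, qs, hq⟩ := List.exists_cons_of_ne_nil hsp
        have hqne : q ≠ [] := by
          apply List.ne_nil_of_length_pos
          exact List.length_pos_of_mem_splitWrtComposition (l := a' :: l') (c := c)
            (by rw [hq]; exact List.mem_cons_self)
        obtain ⟨x, xs, hx⟩ := List.exists_cons_of_ne_nil hqne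
        rw [splitWrt_growFirstC a (a' :: l') hn1 c, hq]
        simp only [List.headI, List.tail_cons, List.map_cons]
        have h1 : mWord Y (a :: q) = (a * Y) * mWord Y q := by
          rw [hx]; exact mWord_cons_cons Y a x xs
        rw [h1, mWord_mul_cons]

end Expand

section Collapse

variable {A : Type*} [Ring A] [Algebra ℂ A]

def gW (X : A) : List A → A → A
  | [], z => z
  | c :: cs, z => c * (X * gW X cs z)

lemma prod_map_mul_eq_gW (X : A) : ∀ (mid : List A) (z : A),
    (mid.map (fun c => X * c)).prod * (X * z) = X * gW X mid z := by
  intro mid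
  induction mid with
  | nil => intro z; simp [gW]
  | cons c cs ih => intro z; simp only [List.map_cons, List.prod_cons, gW, mul_assoc, ih]

lemma gW_eq_mul (X : A) : ∀ (mid : List A) (z : A), gW X mid z = gW X mid 1 * z := by
  intro mid
  induction mid with
  | nil => intro z; simp [gW]
  | cons c cs ih =>
      intro z
      simp only [gW]
      rw [ih z]
      simp [mul_assoc]

lemma gW_mem (B : Subalgebra ℂ A) (X : A) : ∀ (mid : List A), (∀ x ∈ mid, x ∈ B) →
    gW X mid 1 ∈ Algebra.adjoin ℂ ({X} ∪ (B : Set A)) := by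
  intro mid
  induction mid with
  | nil => intro _; exact one_mem _
  | cons c cs ih =>
      intro h
      exact mul_mem
        (Algebra.subset_adjoin (Set.mem_union_right _ (h c (List.mem_cons_self))))
        (mul_mem (Algebra.subset_adjoin (Set.mem_union_left _ rfl))
          (ih fun x hx => h x (List.mem_cons_of_mem _ hx)))

lemma mWord_mem (B : Subalgebra ℂ A) (Y : A) (L : List A) (hL : ∀ x ∈ L, x ∈ B) :
    mWord Y L ∈ Algebra.adjoin ℂ ({Y} ∪ (B : Set A)) := by
  cases L with
  | nil => exact one_mem _
  | cons c cs =>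
      rw [mWord_cons]
      refine mul_mem
        (Algebra.subset_adjoin (Set.mem_union_right _ (hL c (List.mem_cons_self)))) ?_
      apply Subalgebra.list_prod_mem
      intro x hx
      obtain ⟨d, hd, rfl⟩ := List.mem_map.1 hx
      exact mul_mem (Algebra.subset_adjoin (Set.mem_union_left _ rfl))
        (Algebra.subset_adjoin (Set.mem_union_right _ (hL d (List.mem_cons_of_mem _ hd))))

lemma mWord_concat_eq (W u v : A) (L : List A) :
    mWord W (u :: (L ++ [v])) = u * (W * gW W L v) := by
  rw [mWord_cons, List.map_append, List.prod_append]
  have h1 : (([v]).map fun d => W * d).prod = W * v := by simp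
  rw [h1, prod_map_mul_eq_gW]

lemma collapse (B : Subalgebra ℂ A) (Φ : A →ₗ[ℂ] A)
    (hmem : ∀ x : A, Φ x ∈ B) (hfix : ∀ b ∈ B, Φ b = b)
    (hbimod : ∀ b₁ ∈ B, ∀ b₂ ∈ B, ∀ x : A, Φ (b₁ * x * b₂) = b₁ * Φ x * b₂)
    (X Y : A)
    (condA : ∀ y ∈ Algebra.adjoin ℂ ({Y} ∪ (B : Set A)), ∀ a t : A,
      Φ (a * (X * (y * (X * t)))) = Φ (a * (X * (Φ y * (X * t)))))
    (condV : ∀ u ∈ Algebra.adjoin ℂ ({Y} ∪ (B : Set A)),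
        ∀ m ∈ Algebra.adjoin ℂ ({X} ∪ (B : Set A)),
        ∀ v ∈ Algebra.adjoin ℂ ({Y} ∪ (B : Set A)),
      Φ (u * (m * v)) = Φ u * (Φ m * Φ v))
    (d : List A) (hd : ∀ x ∈ d, x ∈ Algebra.adjoin ℂ ({Y} ∪ (B : Set A))) (hne : d ≠ []) :
    Φ (mWord X d) = Φ (mWord X (d.map fun x => Φ x)) := by
  have inner : ∀ (mid : List A),
      (∀ x ∈ mid, x ∈ Algebra.adjoin ℂ ({Y} ∪ (B : Set A))) →
      ∀ (a z : A),
        Φ (a * (X * gW X mid z)) = Φ (a * (X * gW X (mid.map fun x => Φ x) z)) := by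
    intro mid
    induction mid with
    | nil => intro _ a z; simp [gW]
    | cons c cs ih =>
        intro hmid a z
        have hc : c ∈ Algebra.adjoin ℂ ({Y} ∪ (B : Set A)) :=
          hmid c (List.mem_cons_self)
        have step : Φ (a * (X * gW X (c :: cs) z))
            = Φ (a * (X * (Φ c * (X * gW X cs z)))) := by
          simp only [gW]
          exact condA c hc a (gW X cs z)
        rw [step]
        simp only [List.map_cons, gW]
        have e : ∀ w : A, a * (X * (Φ c * (X * w))) = (a * (X * Φ c)) * (X * w) := by
          intro w; simp [mul_assoc]
        rw [e (gW X cs z), e (gW X (cs.map fun x => Φ x) z)]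
        exact ih (fun x hx => hmid x (List.mem_cons_of_mem _ hx)) (a * (X * Φ c)) z
  rcases d with _ | ⟨x, rest⟩
  · exact absurd rfl hne
  rcases List.eq_nil_or_concat rest with hr | ⟨mid, y, hr⟩
  · subst hr
    simp only [mWord_singleton, List.map_cons, List.map_nil]
    exact (hfix (Φ x) (hmem x)).symm
  · rw [List.concat_eq_append] at hr
    subst hr
    have hmidY : ∀ x' ∈ mid, x' ∈ Algebra.adjoin ℂ ({Y} ∪ (B : Set A)) := fun x' hx' =>
      hd x' (List.mem_cons_of_mem _ (List.mem_append_left _ hx'))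
    have hxY : x ∈ Algebra.adjoin ℂ ({Y} ∪ (B : Set A)) := hd x (List.mem_cons_self)
    have hyY : y ∈ Algebra.adjoin ℂ ({Y} ∪ (B : Set A)) := hd y
      (List.mem_cons_of_mem _ (List.mem_append_right _ (List.mem_cons_self)))
    have hmap : (x :: (mid ++ [y])).map (fun x => Φ x)
        = Φ x :: ((mid.map fun x => Φ x) ++ [Φ y]) := by simp
    rw [mWord_concat_eq, hmap, mWord_concat_eq]
    rw [inner mid hmidY x y]
    set mid' := mid.map fun x => Φ x with hmid'
    have hmid'B : ∀ x' ∈ mid', x' ∈ B := by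
      intro x' hx'
      obtain ⟨u, _, rfl⟩ := List.mem_map.1 hx'
      exact hmem u
    have hmS0 : X * gW X mid' 1 ∈ Algebra.adjoin ℂ ({X} ∪ (B : Set A)) :=
      mul_mem (Algebra.subset_adjoin (Set.mem_union_left _ rfl)) (gW_mem B X mid' hmid'B)
    have e1 : X * gW X mid' y = (X * gW X mid' 1) * y := by
      rw [gW_eq_mul X mid' y, ← mul_assoc]
    have e2 : X * gW X mid' (Φ y) = (X * gW X mid' 1) * Φ y := by
      rw [gW_eq_mul X mid' (Φ y), ← mul_assoc]
    rw [e1, e2]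
    rw [condV x hxY _ hmS0 y hyY]
    have hb := hbimod (Φ x) (hmem x) (Φ y) (hmem y) (X * gW X mid' 1)
    rw [← mul_assoc (Φ x) (X * gW X mid' 1) (Φ y), hb]
    simp [mul_assoc]

end Collapse

lemma split_ofFn_eq {A : Type*} (b : ℕ → A) {n : ℕ} (c : Composition n) :
    (List.ofFn fun t : Fin n => b t).splitWrtComposition c
      = List.ofFn fun i : Fin c.length =>
          List.ofFn fun j : Fin (c.blocksFun i) => b (c.sizeUpTo i + j) := by
  apply List.ext_getElem
  · simp
  · intro i h1 h2
    have hi : i < c.length := by simpa using h2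
    rw [List.getElem_splitWrtComposition, List.getElem_ofFn]
    apply List.ext_getElem
    · have hle := c.sizeUpTo_le (i + 1)
      have hsucc : c.sizeUpTo (i + 1) = c.sizeUpTo i + c.blocksFun ⟨i, hi⟩ := c.sizeUpTo_succ' ⟨i, hi⟩
      simp only [List.length_drop, List.length_take, List.length_ofFn]
      rw [min_eq_left hle]
      omega
    · intro j h3 h4
      simp only [List.getElem_drop, List.getElem_take, List.getElem_ofFn]

/-- Theorem 3.7, componentwise: if `X` and `Y` are monotonically
independent over `𝔅`, then the moments of `X + Y` are given by the composition of the
multilinear function series `𝔥_X` and `𝔥_Y`, the inner sum running over all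
compositions `(p₁, …, p_k)` of `n`. -/
theorem hSeries_comp {A : Type*} [Ring A] [Algebra ℂ A]
    (B : Subalgebra ℂ A)
    (Φ : A →ₗ[ℂ] A)
    (hmem : ∀ x : A, Φ x ∈ B)
    (hfix : ∀ b ∈ B, Φ b = b)
    (hbimod : ∀ b₁ ∈ B, ∀ b₂ ∈ B, ∀ x : A, Φ (b₁ * x * b₂) = b₁ * Φ x * b₂)
    (X Y : A)
    (hindep : MonoIndep (fun x => Φ x)
      (fun t : Fin 2 =>
        if t = 0 then (Algebra.adjoin ℂ ({X} ∪ (B : Set A)) : Set A)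
        else (Algebra.adjoin ℂ ({Y} ∪ (B : Set A)) : Set A)))
    (n : ℕ) (hn : 2 ≤ n) (b : ℕ → A) (hb : ∀ t, b t ∈ B) :
    Φ (mWord (X + Y) (List.ofFn fun t : Fin n => b t)) =
      ∑ c : Composition n,
        Φ (mWord X (List.ofFn fun i : Fin c.length =>
          Φ (mWord Y (List.ofFn fun j : Fin (c.blocksFun i) =>
            b (c.sizeUpTo i + j))))) := by
  classical
  obtain ⟨hA, hV⟩ := hindep
  have hX0 : X ∈ Algebra.adjoin ℂ ({X} ∪ (B : Set A)) :=
    Algebra.subset_adjoin (Set.mem_union_left _ rfl)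
  have condA : ∀ y ∈ Algebra.adjoin ℂ ({Y} ∪ (B : Set A)), ∀ a t : A,
      Φ (a * (X * (y * (X * t)))) = Φ (a * (X * (Φ y * (X * t)))) := by
    intro y hy a t
    have h0 : X ∈ (if (0 : Fin 2) = 0 then (Algebra.adjoin ℂ ({X} ∪ (B : Set A)) : Set A)
        else (Algebra.adjoin ℂ ({Y} ∪ (B : Set A)) : Set A)) := by
      rw [if_pos rfl]; exact hX0
    have h1 : y ∈ (if (1 : Fin 2) = 0 then (Algebra.adjoin ℂ ({X} ∪ (B : Set A)) : Set A)
        else (Algebra.adjoin ℂ ({Y} ∪ (B : Set A)) : Set A)) := by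
      rw [if_neg (by decide)]; exact hy
    have h := (hA 0 1 0 (by decide) (by decide) X h0 y h1 X h0).1 a t
    simpa [mul_assoc] using h
  have condV : ∀ u ∈ Algebra.adjoin ℂ ({Y} ∪ (B : Set A)),
      ∀ m ∈ Algebra.adjoin ℂ ({X} ∪ (B : Set A)),
      ∀ v ∈ Algebra.adjoin ℂ ({Y} ∪ (B : Set A)),
      Φ (u * (m * v)) = Φ u * (Φ m * Φ v) := by
    intro u hu m hm v hv
    have hvs : VShaped (![1, 0, 1] : Fin 3 → Fin 2) := by
      refine ⟨1, ?_, ?_⟩ <;> decide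
    have hx : ∀ r : Fin 3, (![u, m, v]) r ∈
        (fun t : Fin 2 => if t = 0 then (Algebra.adjoin ℂ ({X} ∪ (B : Set A)) : Set A)
          else (Algebra.adjoin ℂ ({Y} ∪ (B : Set A)) : Set A)) ((![1, 0, 1] : Fin 3 → Fin 2) r) := by
      intro r
      fin_cases r
      · simpa using hu
      · simpa using hm
      · simpa using hv
    have h := hV 2 ![1, 0, 1] hvs ![u, m, v] hx
    simpa [List.ofFn_succ, mul_assoc] using h
  have final : ∀ (m : ℕ), 1 ≤ m → ∀ L : List A, L.length = m → (∀ x ∈ L, x ∈ B) →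
      Φ (mWord (X + Y) L)
        = ∑ c : Composition m,
            Φ (mWord X ((L.splitWrtComposition c).map fun p => Φ (mWord Y p))) := by
    intro m hm L hLm hLB
    subst hLm
    rcases L with _ | ⟨a, l⟩
    · simp at hm
    · rw [expand_word X Y l a, map_sum]
      apply Finset.sum_congr rfl
      intro c _
      have hpieces_mem : ∀ p ∈ (a :: l).splitWrtComposition c, ∀ x ∈ p, x ∈ B := by
        intro p hp x hx
        apply hLB
        have hxm : x ∈ ((a :: l).splitWrtComposition c).flatten :=
          List.mem_flatten.2 ⟨p, hp, hx⟩
        rwa [List.flatten_splitWrtComposition] at hxm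
      have hYpieces : ∀ q ∈ ((a :: l).splitWrtComposition c).map (mWord Y),
          q ∈ Algebra.adjoin ℂ ({Y} ∪ (B : Set A)) := by
        intro q hq
        obtain ⟨p, hp, rfl⟩ := List.mem_map.1 hq
        exact mWord_mem B Y p (hpieces_mem p hp)
      have hne : ((a :: l).splitWrtComposition c).map (mWord Y) ≠ [] := by
        apply List.ne_nil_of_length_pos
        rw [List.length_map, List.length_splitWrtComposition]
        exact c.length_pos_of_pos (by simp)
      rw [collapse B Φ hmem hfix hbimod X Y condA condV _ hYpieces hne, List.map_map]
      simp only [Function.comp_def]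
  have hLB : ∀ x ∈ (List.ofFn fun t : Fin n => b t), x ∈ B := by
    intro x hx
    obtain ⟨t, rfl⟩ := (List.mem_ofFn).1 hx
    exact hb t
  have hlen : (List.ofFn fun t : Fin n => b t).length = n := List.length_ofFn
  rw [final n (by omega) _ hlen hLB]
  apply Finset.sum_congr rfl
  intro c _
  rw [split_ofFn_eq b c, List.map_ofFn]
  simp only [Function.comp_def]
end

section
/- Let 𝔄 be a *-algebra containing the unital C*-algebra 𝔅 as a *-subalgebra, and Φ : 𝔄 → 𝔅 a conditional expectation. Let (X_n)_{n≥1} be selfadjoint elements of 𝔄 such that: (1) the family (X_n) is monotonically independent over 𝔅 (the subalgebras generated by {X_n} ∪ 𝔅 indexed by n with the natural order); (2) the X_n have identical moment functions: Φ(X_i b₁ X_i ⋯ b_{r−1} X_i) = Φ(X_j b₁ X_j ⋯ b_{r−1} X_j) for all i, j, r ≥ 1 and b₁,…,b_{r−1} ∈ 𝔅; (3) Φ(X_k) = 0 for all k. Set S_N = (X₁ + ⋯ + X_N)/√N. Then for every odd m ≥ 1 and all b₁,…,b_{m−1} ∈ 𝔅: lim_{N→∞} Φ(S_N b₁ S_N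 b₂ ⋯ b_{m−1} S_N) = 0 in the norm of 𝔅. -/
open scoped BigOperators

/-- The moment word `x b₁ x b₂ ⋯ b_{m-1} x` (with `m` factors `x`); applying the
conditional expectation gives the `m`-th moment `m_{x,m}(b₁, …, b_{m-1})`. -/
def momWord {A : Type*} [Ring A] (x : A) (b : ℕ → A) (m : ℕ) : A :=
  (List.ofFn fun u : Fin (m - 1) => x * b u.1).prod * x

set_option linter.unusedSectionVars false

section Aux

variable {B A : Type*} [CStarAlgebra B] [Ring A] [Algebra ℂ A] [StarRing A] [StarModule ℂ A]
variable (ι : B →⋆ₐ[ℂ] A) (Φ : A →ₗ[ℂ] B) (X : ℕ → A)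

/-- letter -/
def ltr (p : ℕ × B) : A := X p.1 * ι p.2

/-- word -/
def wrd (b₀ : B) (L : List (ℕ × B)) : A := ι b₀ * (L.map (ltr ι X)).prod

/-- the subalgebras -/
def Sn (n : ℕ) : Subalgebra ℂ A := Algebra.adjoin ℂ ({X n} ∪ Set.range ι)

lemma X_mem (n : ℕ) : X n ∈ Sn ι X n :=
  Algebra.subset_adjoin (Or.inl rfl)

lemma iota_mem (b : B) (n : ℕ) : ι b ∈ Sn ι X n :=
  Algebra.subset_adjoin (Or.inr ⟨b, rfl⟩)

lemma ltr_mem {p : ℕ × B} {n : ℕ} (h : p.1 = n) : ltr ι X p ∈ Sn ι X n := by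
  subst h; exact mul_mem (X_mem ι X p.1) (iota_mem ι X p.2 p.1)

lemma block_mem {R : List (ℕ × B)} {M : ℕ} (h : ∀ p ∈ R, p.1 = M) :
    (R.map (ltr ι X)).prod ∈ Sn ι X M := by
  refine list_prod_mem ?_
  intro x hx
  obtain ⟨p, hp, rfl⟩ := List.mem_map.1 hx
  exact ltr_mem ι X (h p hp)

variable (hbimod : ∀ (c₁ c₂ : B) (x : A), Φ (ι c₁ * x * ι c₂) = c₁ * Φ x * c₂)

include hbimod

lemma phi_left (cb : B) (x : A) : Φ (ι cb * x) = cb * Φ x := by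
  have := hbimod cb 1 x
  simpa using this

lemma phi_right (x : A) (cb : B) : Φ (x * ι cb) = Φ x * cb := by
  have := hbimod 1 cb x
  simpa using this

end Aux

section Mval

variable {B A : Type*} [CStarAlgebra B] [Ring A] [Algebra ℂ A] [StarRing A] [StarModule ℂ A]
variable (ι : B →⋆ₐ[ℂ] A) (Φ : A →ₗ[ℂ] B) (X : ℕ → A)

/-- a block of letters with a common index `M` -/
def blk (M : ℕ) (cs : List B) : A := (cs.map fun b => X M * ι b).prod

lemma ofFn_prod_mom (x : A) (s : ℕ) (cf : ℕ → B) :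
    (List.ofFn fun t : Fin (s+1) => x * ι (cf t)).prod
      = momWord x (fun t => ι (cf t)) (s+1) * ι (cf s) := by
  rw [List.ofFn_succ']
  simp [momWord, mul_assoc]

lemma map_blk_ofFn (M : ℕ) (cs : List B) {s : ℕ} (hs : cs.length = s + 1) :
    (cs.map fun b => X M * ι b) = List.ofFn (fun t : Fin (s+1) => X M * ι (cs.getD t 1)) := by
  apply List.ext_getElem
  · simp [hs]
  · intro i h1 h2
    have hi : i < cs.length := by simpa using h1
    rw [List.getElem_map, List.getElem_ofFn]
    simp [List.getD_eq_getElem _ _ hi, List.getElem?_eq_getElem hi]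

variable (hmom : ∀ (ii jj r : ℕ), 1 ≤ r → ∀ c : ℕ → B,
      Φ (momWord (X ii) (fun t => ι (c t)) r) = Φ (momWord (X jj) (fun t => ι (c t)) r))
variable (hbimod : ∀ (c₁ c₂ : B) (x : A), Φ (ι c₁ * x * ι c₂) = c₁ * Φ x * c₂)

include hmom hbimod

lemma blk_moment (M : ℕ) (cs : List B) (h : cs ≠ []) :
    Φ (blk ι X M cs) = Φ (blk ι X 0 cs) := by
  obtain ⟨s, hs⟩ : ∃ s, cs.length = s + 1 := by
    cases cs with
    | nil => exact absurd rfl h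
    | cons a t => exact ⟨t.length, rfl⟩
  unfold blk
  rw [map_blk_ofFn ι X M cs hs, map_blk_ofFn ι X 0 cs hs,
    ofFn_prod_mom ι (X M) s (fun t => cs.getD t 1),
    ofFn_prod_mom ι (X 0) s (fun t => cs.getD t 1),
    phi_right ι Φ hbimod, phi_right ι Φ hbimod,
    hmom M 0 (s+1) (by omega)]

lemma wrd_all_eq (b₀ : B) (R : List (ℕ × B)) (M : ℕ) (hR : R ≠ [])
    (hRM : ∀ p ∈ R, p.1 = M) :
    Φ (wrd ι X b₀ R) = b₀ * Φ (blk ι X 0 (R.map Prod.snd)) := by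
  have h1 : (R.map (ltr ι X)).prod = blk ι X M (R.map Prod.snd) := by
    unfold blk
    rw [List.map_map]
    congr 1
    apply List.map_congr_left
    intro p hp
    simp [ltr, hRM p hp]
  have h2 : (R.map Prod.snd) ≠ [] := by
    simpa using hR
  rw [wrd, phi_left ι Φ hbimod, h1, blk_moment ι Φ X hmom hbimod M _ h2]

end Mval

section Step

variable {B A : Type*} [CStarAlgebra B] [Ring A] [Algebra ℂ A] [StarRing A] [StarModule ℂ A]
variable (ι : B →⋆ₐ[ℂ] A) (Φ : A →ₗ[ℂ] B) (X : ℕ → A)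
variable (hindep : MonoIndep (fun x => ι (Φ x))
      (fun n : ℕ => (Algebra.adjoin ℂ ({X n} ∪ Set.range ι) : Set A)))

include hindep

lemma step_cons (b₀ : B) (P Q R : List (ℕ × B)) (v M : ℕ) (b : B)
    (hvM : v < M) (hRM : ∀ p ∈ R, p.1 = M) :
    ι (Φ (wrd ι X b₀ (P ++ (v, b) :: (R ++ Q))))
      = ι (Φ (wrd ι X b₀ (P ++ (v, b * Φ ((R.map (ltr ι X)).prod)) :: Q))) := by
  have hx : ltr ι X (v, b) ∈ (Algebra.adjoin ℂ ({X v} ∪ Set.range ι) : Set A) :=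
    ltr_mem ι X rfl
  have hy : (R.map (ltr ι X)).prod ∈ (Algebra.adjoin ℂ ({X M} ∪ Set.range ι) : Set A) :=
    block_mem ι X hRM
  have hz : (1 : A) ∈ (Algebra.adjoin ℂ ({X v} ∪ Set.range ι) : Set A) :=
    one_mem (Algebra.adjoin ℂ ({X v} ∪ Set.range ι))
  have key := ((hindep.1 v M v hvM hvM _ hx _ hy _ hz).1
    (ι b₀ * (P.map (ltr ι X)).prod) ((Q.map (ltr ι X)).prod))
  simpa only [wrd, ltr, List.map_append, List.prod_append, List.map_cons, List.prod_cons,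
    map_mul, mul_one, one_mul, mul_assoc] using key

lemma step_nil (b₀ : B) (Q' R : List (ℕ × B)) (k M : ℕ) (b' : B)
    (hkM : k < M) (hRM : ∀ p ∈ R, p.1 = M) :
    ι (Φ (wrd ι X b₀ (R ++ (k, b') :: Q')))
      = ι (Φ (wrd ι X (b₀ * Φ ((R.map (ltr ι X)).prod)) ((k, b') :: Q'))) := by
  have hx : (1 : A) ∈ (Algebra.adjoin ℂ ({X k} ∪ Set.range ι) : Set A) :=
    one_mem (Algebra.adjoin ℂ ({X k} ∪ Set.range ι))
  have hy : (R.map (ltr ι X)).prod ∈ (Algebra.adjoin ℂ ({X M} ∪ Set.range ι) : Set A) :=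
    block_mem ι X hRM
  have hz : ltr ι X (k, b') ∈ (Algebra.adjoin ℂ ({X k} ∪ Set.range ι) : Set A) :=
    ltr_mem ι X rfl
  have key := ((hindep.1 k M k hkM hkM _ hx _ hy _ hz).1
    (ι b₀) ((Q'.map (ltr ι X)).prod))
  simpa only [wrd, ltr, List.map_append, List.prod_append, List.map_cons, List.prod_cons,
    map_mul, mul_one, one_mul, mul_assoc] using key

end Step

section Decomp

variable {α : Type*}

lemma le_foldr_max (l : List ℕ) {a : ℕ} (h : a ∈ l) : a ≤ l.foldr max 0 := by
  induction l with
  | nil => simp at h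
  | cons x t ih =>
    rcases List.mem_cons.1 h with rfl | h
    · exact le_max_left _ _
    · exact le_trans (ih h) (le_max_right _ _)

lemma foldr_max_mem (l : List ℕ) (h : l ≠ []) : l.foldr max 0 ∈ l := by
  induction l with
  | nil => exact absurd rfl h
  | cons x t ih =>
    cases t with
    | nil => simp
    | cons y t' =>
      rcases max_choice x ((y :: t').foldr max 0) with h1 | h1
      · simp only [List.foldr_cons] at h1 ⊢
        rw [h1]; exact List.mem_cons_self
      · simp only [List.foldr_cons] at h1 ⊢
        rw [h1]
        exact List.mem_cons_of_mem _ (ih (by simp))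

lemma exists_decomp (L : List (ℕ × α)) (hL : L ≠ []) :
    ∃ (M : ℕ) (P R Q : List (ℕ × α)), L = P ++ R ++ Q ∧ R ≠ [] ∧
      (∀ p ∈ R, p.1 = M) ∧ (∀ p ∈ P, p.1 < M) ∧ (∀ p ∈ Q.head?, p.1 < M) := by
  set M := (L.map Prod.fst).foldr max 0 with hM
  have hle : ∀ p ∈ L, p.1 ≤ M := fun p hp => le_foldr_max _ (List.mem_map_of_mem hp)
  have hMmem : M ∈ L.map Prod.fst := foldr_max_mem _ (by simpa using hL)
  set P := L.takeWhile (fun p => p.1 != M) with hP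
  set rest := L.dropWhile (fun p => p.1 != M) with hrest
  have hPrest : P ++ rest = L := List.takeWhile_append_dropWhile
  have hrestne : rest ≠ [] := by
    intro h0
    rw [h0, List.append_nil] at hPrest
    obtain ⟨p, hp, hpM⟩ := List.mem_map.1 hMmem
    rw [← hPrest] at hp
    have := List.mem_takeWhile_imp hp
    simp [hpM] at this
  obtain ⟨r0, rest', hr0⟩ := List.exists_cons_of_ne_nil hrestne
  have hr0M : r0.1 = M := by
    have := List.head?_dropWhile_not (fun p : ℕ × α => p.1 != M) L
    rw [← hrest, hr0] at this
    simpa using this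
  set R := rest.takeWhile (fun p => p.1 == M) with hR
  set Q := rest.dropWhile (fun p => p.1 == M) with hQ
  refine ⟨M, P, R, Q, ?_, ?_, ?_, ?_, ?_⟩
  · rw [List.append_assoc, hR, hQ, List.takeWhile_append_dropWhile, hPrest]
  · rw [hR, hr0, List.takeWhile_cons_of_pos (by simpa using hr0M)]
    simp
  · intro p hp
    have := List.mem_takeWhile_imp (hR ▸ hp)
    simpa using this
  · intro p hp
    have h1 := List.mem_takeWhile_imp (hP ▸ hp)
    have h2 : p ∈ L := (List.takeWhile_sublist _).mem (hP ▸ hp)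
    have := hle p h2
    simp only [bne_iff_ne, ne_eq] at h1
    omega
  · intro p hp
    have h1 := List.head?_dropWhile_not (fun p : ℕ × α => p.1 == M) rest
    rw [← hQ] at h1
    have hmem : p ∈ Q := List.mem_of_mem_head? hp
    have h2 : p ∈ L := by
      rw [← hPrest]
      exact List.mem_append_right _ ((List.dropWhile_sublist _).mem (hQ ▸ hmem))
    have h3 := hle p h2
    cases hh : Q.head? with
    | none => rw [hh] at hp; simp at hp
    | some q =>
      rw [hh] at hp h1
      have : p = q := by simpa using hp.symm
      subst this
      simp only at h1
      have : ¬ (p.1 = M) := by simpa using h1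
      omega

end Decomp

section SingletonZero

variable {B A : Type*} [CStarAlgebra B] [Ring A] [Algebra ℂ A] [StarRing A] [StarModule ℂ A]
variable (ι : B →⋆ₐ[ℂ] A) (Φ : A →ₗ[ℂ] B) (X : ℕ → A)

lemma count_of_all_eq {l : List ℕ} {M : ℕ} (h : ∀ a ∈ l, a = M) (v : ℕ) :
    l.count v = if v = M then l.length else 0 := by
  have h2 : l = List.replicate l.length M := List.eq_replicate_of_mem h
  rw [h2, List.count_replicate]
  simp only [List.length_replicate]
  by_cases hv : v = M
  · simp [hv]
  · simp only [if_neg hv]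
    rw [if_neg (fun h => hv ((beq_iff_eq.1 h).symm))]

variable (hι : Function.Injective ι)
variable (hbimod : ∀ (c₁ c₂ : B) (x : A), Φ (ι c₁ * x * ι c₂) = c₁ * Φ x * c₂)
variable (hcent : ∀ n, Φ (X n) = 0)
variable (hindep : MonoIndep (fun x => ι (Φ x))
      (fun n : ℕ => (Algebra.adjoin ℂ ({X n} ∪ Set.range ι) : Set A)))

include hι hbimod hcent hindep

lemma singleton_zero : ∀ (n : ℕ) (L : List (ℕ × B)) (b₀ : B) (v : ℕ), L.length ≤ n →
    (L.map Prod.fst).count v = 1 → Φ (wrd ι X b₀ L) = 0 := by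
  intro n
  induction n with
  | zero =>
    intro L b₀ v hlen hcount
    rw [List.length_eq_zero_iff.1 (Nat.le_zero.1 hlen)] at hcount
    simp at hcount
  | succ n ih =>
    intro L b₀ v hlen hcount
    have hLne : L ≠ [] := by
      intro h0; rw [h0] at hcount; simp at hcount
    obtain ⟨M, P, R, Q, hdec, hRne, hRM, hPlt, hQhd⟩ := exists_decomp L hLne
    -- the singleton letter has zero expectation when it is the block
    have hRone : R.length = 1 → Φ ((R.map (ltr ι X)).prod) = 0 := by
      intro h1
      obtain ⟨p, rfl⟩ := List.length_eq_one_iff.1 h1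
      have hpM : p.1 = M := hRM p (List.mem_singleton_self p)
      simp only [List.map_cons, List.map_nil, List.prod_cons, List.prod_nil, mul_one, ltr]
      rw [phi_right ι Φ hbimod, hcent, zero_mul]
    have hRlen : 1 ≤ R.length := List.length_pos_iff.2 hRne
    have hRcount : ∀ w : ℕ, (R.map Prod.fst).count w = (if w = M then R.length else 0) := by
      intro w
      rw [count_of_all_eq (fun a ha => by
        obtain ⟨p, hp, rfl⟩ := List.mem_map.1 ha; exact hRM p hp) w]
      simp
    rcases List.eq_nil_or_concat P with hPnil | ⟨P'', pb, hPcon⟩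
    · subst hPnil
      simp only [List.nil_append] at hdec
      cases Q with
      | nil =>
        -- all letters have index M
        rw [List.append_nil] at hdec
        subst hdec
        have hall : ∀ a ∈ L.map Prod.fst, a = M := by
          intro a ha
          obtain ⟨p, hp, rfl⟩ := List.mem_map.1 ha
          exact hRM p hp
        rw [count_of_all_eq hall] at hcount
        by_cases hv : v = M
        · rw [if_pos hv] at hcount
          simp only [List.length_map] at hcount
          obtain ⟨p, rfl⟩ := List.length_eq_one_iff.1 hcount
          simp only [wrd, List.map_cons, List.map_nil, List.prod_cons, List.prod_nil,
            mul_one, ltr, ← mul_assoc]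
          rw [hbimod, hcent, mul_zero, zero_mul]
        · rw [if_neg hv] at hcount; simp at hcount
      | cons q Q' =>
        obtain ⟨k, b'⟩ := q
        have hkM : k < M := by
          have := hQhd (k, b') (by simp)
          simpa using this
        subst hdec
        have hstep := step_nil ι Φ X hindep b₀ Q' R k M b' hkM hRM
        set μ := Φ ((R.map (ltr ι X)).prod) with hμ
        have hcnt2 : (R.map Prod.fst).count v + (((k, b') :: Q').map Prod.fst).count v = 1 := by
          rw [← List.count_append, ← List.map_append]
          exact hcount
        rw [hRcount v] at hcnt2
        by_cases hv : v = M
        · rw [if_pos hv] at hcnt2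
          have hR1 : R.length = 1 := by omega
          have hμ0 : μ = 0 := hRone hR1
          have heq : Φ (wrd ι X b₀ (R ++ (k, b') :: Q'))
              = Φ (wrd ι X (b₀ * μ) ((k, b') :: Q')) := hι hstep
          rw [heq, hμ0, mul_zero]
          simp [wrd]
        · rw [if_neg hv] at hcnt2
          have hlen2 : (((k, b') :: Q') : List (ℕ × B)).length ≤ n := by
            have := hlen
            simp only [List.length_append, List.length_cons] at this ⊢
            omega
          have heq : Φ (wrd ι X b₀ (R ++ (k, b') :: Q'))
              = Φ (wrd ι X (b₀ * μ) ((k, b') :: Q')) := hι hstep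
          rw [heq]
          exact ih _ _ v hlen2 (by omega)
    · obtain ⟨v₀, b⟩ := pb
      have hv₀ : v₀ < M := hPlt (v₀, b) (by rw [hPcon]; simp)
      have hL2 : L = P'' ++ (v₀, b) :: (R ++ Q) := by
        rw [hdec, hPcon]
        simp [List.concat_eq_append, List.append_assoc]
      have hstep := step_cons ι Φ X hindep b₀ P'' Q R v₀ M b hv₀ hRM
      set μ := Φ ((R.map (ltr ι X)).prod) with hμ
      have hcnt2 : (P''.map Prod.fst).count v + ((if v₀ = v then 1 else 0)
          + ((R.map Prod.fst).count v + (Q.map Prod.fst).count v)) = 1 := by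
        have := hcount
        rw [hL2] at this
        simp only [List.map_append, List.map_cons, List.count_append, List.count_cons] at this
        simp only [beq_iff_eq] at this
        omega
      rw [hRcount v] at hcnt2
      rw [hL2]
      by_cases hv : v = M
      · rw [if_pos hv] at hcnt2
        have hv₀v : ¬ (v₀ = v) := by omega
        rw [if_neg hv₀v] at hcnt2
        have hR1 : R.length = 1 := by omega
        have hμ0 : μ = 0 := hRone hR1
        have heq : Φ (wrd ι X b₀ (P'' ++ (v₀, b) :: (R ++ Q)))
            = Φ (wrd ι X b₀ (P'' ++ (v₀, b * μ) :: Q)) := hι hstep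
        rw [heq, hμ0, mul_zero]
        have hzero : (0 : A) ∈ (P'' ++ (v₀, (0 : B)) :: Q).map (ltr ι X) := by
          have : ltr ι X (v₀, (0 : B)) = 0 := by simp [ltr]
          rw [← this]
          exact List.mem_map_of_mem (by simp)
        rw [wrd, List.prod_eq_zero hzero, mul_zero, map_zero]
      · rw [if_neg hv] at hcnt2
        have heq : Φ (wrd ι X b₀ (P'' ++ (v₀, b) :: (R ++ Q)))
            = Φ (wrd ι X b₀ (P'' ++ (v₀, b * μ) :: Q)) := hι hstep
        rw [heq]
        have hlen2 : (P'' ++ (v₀, b * μ) :: Q).length ≤ n := by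
          have := hlen
          rw [hL2] at this
          simp only [List.length_append, List.length_cons] at this ⊢
          omega
        refine ih _ _ v hlen2 ?_
        simp only [List.map_append, List.map_cons, List.count_append, List.count_cons]
        simp only [beq_iff_eq]
        omega

end SingletonZero

section PatternInv

variable {B A : Type*} [CStarAlgebra B] [Ring A] [Algebra ℂ A] [StarRing A] [StarModule ℂ A]
variable (ι : B →⋆ₐ[ℂ] A) (Φ : A →ₗ[ℂ] B) (X : ℕ → A)
variable (hι : Function.Injective ι)
variable (hbimod : ∀ (c₁ c₂ : B) (x : A), Φ (ι c₁ * x * ι c₂) = c₁ * Φ x * c₂)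
variable (hmom : ∀ (ii jj r : ℕ), 1 ≤ r → ∀ c : ℕ → B,
      Φ (momWord (X ii) (fun t => ι (c t)) r) = Φ (momWord (X jj) (fun t => ι (c t)) r))
variable (hindep : MonoIndep (fun x => ι (Φ x))
      (fun n : ℕ => (Algebra.adjoin ℂ ({X n} ∪ Set.range ι) : Set A)))

include hmom hbimod in
lemma block_reduce (R : List (ℕ × B)) (M : ℕ) (hRne : R ≠ []) (hRM : ∀ p ∈ R, p.1 = M) :
    Φ ((R.map (ltr ι X)).prod) = Φ (blk ι X 0 (R.map Prod.snd)) := by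
  have h1 : (R.map (ltr ι X)).prod = blk ι X M (R.map Prod.snd) := by
    unfold blk; rw [List.map_map]; congr 1
    apply List.map_congr_left; intro p hp; simp [ltr, hRM p hp]
  rw [h1, blk_moment ι Φ X hmom hbimod M _ (by simpa using hRne)]

include hι hbimod hmom hindep

lemma pattern_inv : ∀ (n : ℕ) (g : ℕ → ℕ), StrictMono g → ∀ (L : List (ℕ × B)) (b₀ : B),
    L.length ≤ n →
    Φ (wrd ι X b₀ (L.map (fun q => (g q.1, q.2)))) = Φ (wrd ι X b₀ L) := by
  intro n
  induction n with
  | zero =>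
    intro g hg L b₀ hlen
    rw [List.length_eq_zero_iff.1 (Nat.le_zero.1 hlen)]
    simp
  | succ n ih =>
    intro g hg L b₀ hlen
    rcases eq_or_ne L [] with rfl | hLne
    · simp
    obtain ⟨M, P, R, Q, hdec, hRne, hRM, hPlt, hQhd⟩ := exists_decomp L hLne
    set gm : ℕ × B → ℕ × B := fun q => (g q.1, q.2) with hgm
    have hRMg : ∀ p ∈ R.map gm, p.1 = g M := by
      intro p hp
      obtain ⟨q, hq, rfl⟩ := List.mem_map.1 hp
      simp [hgm, hRM q hq]
    have hRg_snd : (R.map gm).map Prod.snd = R.map Prod.snd := by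
      rw [List.map_map]; rfl
    have hRgne : R.map gm ≠ [] := by simpa using hRne
    have hμeq : Φ (((R.map gm).map (ltr ι X)).prod) = Φ ((R.map (ltr ι X)).prod) := by
      rw [block_reduce ι Φ X hbimod hmom (R.map gm) (g M) hRgne hRMg,
        block_reduce ι Φ X hbimod hmom R M hRne hRM, hRg_snd]
    set μ := Φ ((R.map (ltr ι X)).prod) with hμ
    rcases List.eq_nil_or_concat P with hPnil | ⟨P'', pb, hPcon⟩
    · subst hPnil
      simp only [List.nil_append] at hdec
      cases Q with
      | nil =>
        rw [List.append_nil] at hdec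
        subst hdec
        rw [wrd_all_eq ι Φ X hmom hbimod b₀ (L.map gm) (g M) (by simpa using hLne) hRMg,
          wrd_all_eq ι Φ X hmom hbimod b₀ L M hLne hRM, hRg_snd]
      | cons q Q' =>
        obtain ⟨k, b'⟩ := q
        have hkM : k < M := by simpa using hQhd (k, b') (by simp)
        subst hdec
        have hstep := step_nil ι Φ X hindep b₀ Q' R k M b' hkM hRM
        have hstep' := step_nil ι Φ X hindep b₀ (Q'.map gm) (R.map gm) (g k) (g M) b'
          (hg hkM) hRMg
        have hmapL : (R ++ (k, b') :: Q').map gm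
            = R.map gm ++ (g k, b') :: Q'.map gm := by
          simp [hgm]
        rw [hmapL]
        have e1 : Φ (wrd ι X b₀ (R.map gm ++ (g k, b') :: Q'.map gm))
            = Φ (wrd ι X (b₀ * μ) ((g k, b') :: Q'.map gm)) := by
          have := hι hstep'
          rw [this, hμeq]
        have e2 : Φ (wrd ι X b₀ (R ++ (k, b') :: Q'))
            = Φ (wrd ι X (b₀ * μ) ((k, b') :: Q')) := hι hstep
        rw [e1, e2]
        have hlen2 : (((k, b') :: Q') : List (ℕ × B)).length ≤ n := by
          have := hlen
          simp only [List.length_append, List.length_cons] at this ⊢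
          have := List.length_pos_iff.2 hRne
          omega
        have := ih g hg ((k, b') :: Q') (b₀ * μ) hlen2
        simpa [hgm] using this
    · obtain ⟨v₀, b⟩ := pb
      have hv₀ : v₀ < M := hPlt (v₀, b) (by rw [hPcon]; simp)
      have hL2 : L = P'' ++ (v₀, b) :: (R ++ Q) := by
        rw [hdec, hPcon]
        simp [List.concat_eq_append, List.append_assoc]
      rw [hL2]
      have hstep := step_cons ι Φ X hindep b₀ P'' Q R v₀ M b hv₀ hRM
      have hstep' := step_cons ι Φ X hindep b₀ (P''.map gm) (Q.map gm) (R.map gm)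
        (g v₀) (g M) b (hg hv₀) hRMg
      have hmapL : (P'' ++ (v₀, b) :: (R ++ Q)).map gm
          = P''.map gm ++ (g v₀, b) :: (R.map gm ++ Q.map gm) := by
        simp [hgm]
      rw [hmapL]
      have e1 : Φ (wrd ι X b₀ (P''.map gm ++ (g v₀, b) :: (R.map gm ++ Q.map gm)))
          = Φ (wrd ι X b₀ (P''.map gm ++ (g v₀, b * μ) :: Q.map gm)) := by
        have := hι hstep'
        rw [this, hμeq]
      have e2 : Φ (wrd ι X b₀ (P'' ++ (v₀, b) :: (R ++ Q)))
          = Φ (wrd ι X b₀ (P'' ++ (v₀, b * μ) :: Q)) := hι hstep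
      rw [e1, e2]
      have hlen2 : (P'' ++ (v₀, b * μ) :: Q).length ≤ n := by
        have := hlen
        rw [hL2] at this
        simp only [List.length_append, List.length_cons] at this ⊢
        have := List.length_pos_iff.2 hRne
        omega
      have := ih g hg (P'' ++ (v₀, b * μ) :: Q) b₀ hlen2
      simpa [hgm] using this

end PatternInv

section Counting

open Finset

lemma count_ofFn_eq {m : ℕ} (j : Fin m → ℕ) (v : ℕ) :
    (List.ofFn j).count v = (Finset.univ.filter fun u => j u = v).card := by
  classical
  rw [← Multiset.coe_count, List.ofFn_eq_map, ← Multiset.map_coe,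
    Multiset.count_map]
  have h1 : (Finset.univ.filter fun u => j u = v).card
      = Multiset.card (Multiset.filter (fun u => j u = v) Finset.univ.val) := rfl
  rw [h1]
  have h2 : (Finset.univ.val : Multiset (Fin m)) = ↑(List.finRange m) := rfl
  rw [h2]
  congr 1
  apply Multiset.filter_congr
  intro u _
  exact ⟨fun h => h.symm, fun h => h.symm⟩

lemma image_card_le_of_no_singleton {m h : ℕ} (hm : m = 2 * h + 1)
    (j : Fin m → ℕ) (hj : ∀ v, ¬ (List.ofFn j).count v = 1) :
    (Finset.univ.image j).card ≤ h := by
  classical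
  have hsum : (Finset.univ : Finset (Fin m)).card
      = ∑ v ∈ Finset.univ.image j, (Finset.univ.filter fun u => j u = v).card :=
    Finset.card_eq_sum_card_fiberwise (fun u _ => Finset.mem_image_of_mem j (Finset.mem_univ u))
  have hm' : (Finset.univ : Finset (Fin m)).card = m := by simp
  have hfib : ∀ v ∈ Finset.univ.image j, 2 ≤ (Finset.univ.filter fun u => j u = v).card := by
    intro v hv
    obtain ⟨u, _, rfl⟩ := Finset.mem_image.1 hv
    have h1 : 1 ≤ (Finset.univ.filter fun w => j w = j u).card := by
      refine Finset.card_pos.2 ⟨u, ?_⟩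
      simp
    have h2 := hj (j u)
    rw [count_ofFn_eq] at h2
    omega
  have h2 : 2 * (Finset.univ.image j).card ≤ m := by
    calc 2 * (Finset.univ.image j).card = ∑ _v ∈ Finset.univ.image j, 2 := by
          rw [Finset.sum_const, smul_eq_mul, mul_comm]
      _ ≤ ∑ v ∈ Finset.univ.image j, (Finset.univ.filter fun u => j u = v).card :=
          Finset.sum_le_sum hfib
      _ = m := by rw [← hsum, hm']
  omega

lemma card_no_singleton_le {m h N : ℕ} (hm : m = 2 * h + 1) (hN : 1 ≤ N)
    [inst : DecidablePred (fun j : Fin m → ℕ => ∀ v, ¬ (List.ofFn j).count v = 1)] :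
    ((Fintype.piFinset (fun _ : Fin m => Finset.range N)).filter
       (fun j => ∀ v, ¬ (List.ofFn j).count v = 1)).card ≤ m ^ m * N ^ h := by
  classical
  set Bad := ((Fintype.piFinset (fun _ : Fin m => Finset.range N)).filter
       (fun j => ∀ v, ¬ (List.ofFn j).count v = 1)) with hBad
  set T := (Fintype.piFinset (fun _ : Fin m => Finset.range m)) ×ˢ
      (Fintype.piFinset (fun _ : Fin h => Finset.range N)) with hT
  -- encoding
  let s : (Fin m → ℕ) → Finset ℕ := fun j => Finset.univ.image j
  let iso : ∀ j : Fin m → ℕ, Fin (s j).card ≃o {x // x ∈ s j} :=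
    fun j => (s j).orderIsoOfFin rfl
  let rk : (Fin m → ℕ) → Fin m → ℕ := fun j u =>
    ((iso j).symm ⟨j u, Finset.mem_image_of_mem j (Finset.mem_univ u)⟩ : Fin (s j).card)
  let en : (Fin m → ℕ) → Fin h → ℕ := fun j i =>
    if hi : (i : ℕ) < (s j).card then ((iso j) ⟨i, hi⟩ : ℕ) else 0
  have key : ∀ j ∈ Bad, ∀ u : Fin m, ∃ hu : rk j u < h,
      j u = en j ⟨rk j u, hu⟩ := by
    intro j hj u
    have hcard : (s j).card ≤ h := by
      rw [hBad, Finset.mem_filter] at hj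
      exact image_card_le_of_no_singleton hm j hj.2
    have h1 : rk j u < (s j).card := ((iso j).symm _).isLt
    refine ⟨lt_of_lt_of_le h1 hcard, ?_⟩
    show j u = en j _
    simp only [en]
    rw [dif_pos h1]
    have : (⟨rk j u, h1⟩ : Fin (s j).card)
        = (iso j).symm ⟨j u, Finset.mem_image_of_mem j (Finset.mem_univ u)⟩ := by
      apply Fin.ext; rfl
    rw [this, OrderIso.apply_symm_apply]
  have hinj : Set.InjOn (fun j => (rk j, en j)) Bad := by
    intro j₁ h₁ j₂ h₂ heq
    have e1 : rk j₁ = rk j₂ := congrArg Prod.fst heq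
    have e2 : en j₁ = en j₂ := congrArg Prod.snd heq
    funext u
    obtain ⟨hu1, hju1⟩ := key j₁ h₁ u
    obtain ⟨hu2, hju2⟩ := key j₂ h₂ u
    rw [hju1, hju2, e2]
    congr 1
    apply Fin.ext
    show rk j₁ u = rk j₂ u
    rw [e1]
  have hmaps : ∀ j ∈ Bad, (rk j, en j) ∈ T := by
    intro j hj
    rw [hT, Finset.mem_product]
    constructor
    · rw [Fintype.mem_piFinset]
      intro u
      rw [Finset.mem_range]
      show rk j u < m
      have h1 : rk j u < (s j).card := ((iso j).symm _).isLt
      have h2 : (s j).card ≤ m := le_trans (Finset.card_image_le) (by simp)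
      omega
    · rw [Fintype.mem_piFinset]
      intro i
      rw [Finset.mem_range]
      show en j i < N
      by_cases hi : (i : ℕ) < (s j).card
      · simp only [en]
        rw [dif_pos hi]
        have hmem : ((iso j) ⟨i, hi⟩ : ℕ) ∈ s j := ((iso j) ⟨i, hi⟩).2
        obtain ⟨u, _, hu⟩ := Finset.mem_image.1 hmem
        rw [hBad, Finset.mem_filter, Fintype.mem_piFinset] at hj
        have := hj.1 u
        rw [Finset.mem_range] at this
        omega
      · simp only [en]
        rw [dif_neg hi]
        omega
  calc Bad.card ≤ T.card := Finset.card_le_card_of_injOn _ hmaps hinj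
    _ = m ^ m * N ^ h := by
        rw [hT, Finset.card_product, Fintype.card_piFinset, Fintype.card_piFinset]
        simp

end Counting

section Bound

variable {B A : Type*} [CStarAlgebra B] [Ring A] [Algebra ℂ A] [StarRing A] [StarModule ℂ A]
variable (ι : B →⋆ₐ[ℂ] A) (Φ : A →ₗ[ℂ] B) (X : ℕ → A)
variable (hι : Function.Injective ι)
variable (hbimod : ∀ (c₁ c₂ : B) (x : A), Φ (ι c₁ * x * ι c₂) = c₁ * Φ x * c₂)
variable (hmom : ∀ (ii jj r : ℕ), 1 ≤ r → ∀ c : ℕ → B,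
      Φ (momWord (X ii) (fun t => ι (c t)) r) = Φ (momWord (X jj) (fun t => ι (c t)) r))
variable (hindep : MonoIndep (fun x => ι (Φ x))
      (fun n : ℕ => (Algebra.adjoin ℂ ({X n} ∪ Set.range ι) : Set A)))

include hι hbimod hmom hindep

lemma exists_bound (m : ℕ) (cc : Fin m → B) :
    ∃ C : ℝ, 0 ≤ C ∧ ∀ j : Fin m → ℕ,
      ‖Φ (wrd ι X 1 (List.ofFn fun u => (j u, cc u)))‖ ≤ C := by
  classical
  set T := Fintype.piFinset (fun _ : Fin m => Finset.range (m + 1)) with hT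
  refine ⟨∑ j' ∈ T, ‖Φ (wrd ι X 1 (List.ofFn fun u => (j' u, cc u)))‖,
    Finset.sum_nonneg (fun _ _ => norm_nonneg _), ?_⟩
  intro j
  set s : Finset ℕ := Finset.univ.image j with hs
  set d : ℕ := s.card with hd
  have hdm : d ≤ m := le_trans Finset.card_image_le (by simp)
  set iso := s.orderIsoOfFin (rfl : s.card = d) with hiso
  set j' : Fin m → ℕ := fun u =>
    (iso.symm ⟨j u, Finset.mem_image_of_mem j (Finset.mem_univ u)⟩ : Fin d) with hj'
  have hj'lt : ∀ u, j' u < d := fun u => (iso.symm _).isLt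
  set K : ℕ := s.sup id with hK
  set g : ℕ → ℕ := fun i => if h : i < d then (iso ⟨i, h⟩ : ℕ) else i + K + 1 with hg
  have hgmono : StrictMono g := by
    intro a b hab
    by_cases hb : b < d
    · have ha : a < d := lt_trans hab hb
      show (if h : a < d then (iso ⟨a, h⟩ : ℕ) else a + K + 1)
        < (if h : b < d then (iso ⟨b, h⟩ : ℕ) else b + K + 1)
      rw [dif_pos ha, dif_pos hb]
      have h1 : (⟨a, ha⟩ : Fin d) < ⟨b, hb⟩ := hab
      have h2 : iso ⟨a, ha⟩ < iso ⟨b, hb⟩ := iso.lt_iff_lt.2 h1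
      exact h2
    · show (if h : a < d then (iso ⟨a, h⟩ : ℕ) else a + K + 1)
        < (if h : b < d then (iso ⟨b, h⟩ : ℕ) else b + K + 1)
      rw [dif_neg hb]
      by_cases ha : a < d
      · rw [dif_pos ha]
        have h1 : (iso ⟨a, ha⟩ : ℕ) ∈ s := (iso ⟨a, ha⟩).2
        have h2 : (iso ⟨a, ha⟩ : ℕ) ≤ K := Finset.le_sup (f := id) h1
        omega
      · rw [dif_neg ha]
        omega
  have hgj : ∀ u, g (j' u) = j u := by
    intro u
    show (if h : j' u < d then (iso ⟨j' u, h⟩ : ℕ) else _) = j u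
    rw [dif_pos (hj'lt u)]
    have : (⟨j' u, hj'lt u⟩ : Fin d)
        = iso.symm ⟨j u, Finset.mem_image_of_mem j (Finset.mem_univ u)⟩ := by
      apply Fin.ext; rfl
    rw [this, OrderIso.apply_symm_apply]
  have hmap : (List.ofFn fun u => (j u, cc u))
      = (List.ofFn fun u => (j' u, cc u)).map (fun q => (g q.1, q.2)) := by
    rw [List.map_ofFn]
    congr 1
    funext u
    show (j u, cc u) = (g (j' u), cc u)
    rw [hgj u]
  rw [hmap, pattern_inv ι Φ X hι hbimod hmom hindep m g hgmono _ 1 (by simp)]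
  refine Finset.single_le_sum (f := fun (jq : Fin m → ℕ) =>
    ‖Φ (wrd ι X 1 (List.ofFn fun u => (jq u, cc u)))‖) (fun _ _ => norm_nonneg _) ?_
  rw [hT, Fintype.mem_piFinset]
  intro u
  rw [Finset.mem_range]
  have := hj'lt u
  omega

end Bound


/-- Theorem 5.3, vanishing of odd limit moments: for a monotonically
independent, identically distributed, centered selfadjoint family `(X_n)` over the
C*-algebra `𝔅`, the odd moments of `S_N = (X₁ + ⋯ + X_N)/√N` tend to `0` in norm. -/
theorem monotone_clt_odd_moments_vanish {B A : Type*} [CStarAlgebra B]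
    [Ring A] [Algebra ℂ A] [StarRing A] [StarModule ℂ A]
    (ι : B →⋆ₐ[ℂ] A) (hι : Function.Injective ι)
    (Φ : A →ₗ[ℂ] B)
    (hfix : ∀ c : B, Φ (ι c) = c)
    (hbimod : ∀ (c₁ c₂ : B) (x : A), Φ (ι c₁ * x * ι c₂) = c₁ * Φ x * c₂)
    (X : ℕ → A)
    (hsa : ∀ n, star (X n) = X n)
    (hindep : MonoIndep (fun x => ι (Φ x))
      (fun n : ℕ => (Algebra.adjoin ℂ ({X n} ∪ Set.range ι) : Set A)))
    (hmom : ∀ (ii jj r : ℕ), 1 ≤ r → ∀ c : ℕ → B,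
      Φ (momWord (X ii) (fun t => ι (c t)) r) = Φ (momWord (X jj) (fun t => ι (c t)) r))
    (hcent : ∀ n, Φ (X n) = 0)
    (m : ℕ) (hm : 1 ≤ m) (hodd : Odd m) (c : ℕ → B) :
    Filter.Tendsto
      (fun N : ℕ =>
        Φ (momWord (((Real.sqrt N : ℂ))⁻¹ • ∑ k ∈ Finset.range N, X k)
          (fun t => ι (c t)) m))
      Filter.atTop (nhds 0) := by
  classical
  obtain ⟨h, hh⟩ := hodd
  obtain ⟨s, rfl⟩ : ∃ s, m = s + 1 := ⟨m - 1, by omega⟩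
  have hh' : s + 1 = 2 * h + 1 := by omega
  set cc : Fin (s+1) → B := fun u => if (u : ℕ) < s then c u.1 else 1 with hcc
  set ML := (MultilinearMap.mkPiAlgebraFin ℂ (s+1) A).compLinearMap
      (fun u : Fin (s+1) => LinearMap.mulRight ℂ (ι (cc u))) with hMLdef
  have hML : ∀ v : Fin (s+1) → A, ML v = (List.ofFn fun u => v u * ι (cc u)).prod := by
    intro v
    simp [hMLdef, MultilinearMap.compLinearMap_apply, MultilinearMap.mkPiAlgebraFin_apply,
      LinearMap.mulRight_apply]
  have hmw : ∀ x : A, momWord x (fun t => ι (c t)) (s+1) = ML (fun _ => x) := by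
    intro x
    rw [hML]
    rw [List.ofFn_succ' (f := fun u : Fin (s+1) => x * ι (cc u))]
    rw [List.prod_concat]
    have h1 : cc (Fin.last s) = 1 := by simp [hcc]
    have h2 : ∀ i : Fin s, cc i.castSucc = c i.1 := by
      intro i; simp [hcc, i.isLt]
    rw [h1, map_one, mul_one]
    unfold momWord
    congr 1
    refine congrArg List.prod (congrArg List.ofFn (funext fun u => ?_))
    show x * ι (c u.1) = x * ι (cc u.castSucc)
    rw [h2 u]
  have hWj : ∀ j : Fin (s+1) → ℕ, ML (fun i => X (j i))
      = wrd ι X 1 (List.ofFn fun u => (j u, cc u)) := by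
    intro j
    rw [hML]
    rw [wrd, map_one, one_mul, List.map_ofFn]
    rfl
  obtain ⟨C, hC0, hCb⟩ := exists_bound ι Φ X hι hbimod hmom hindep (s+1) cc
  set K := (((s+1 : ℕ) : ℝ) ^ (s+1)) * C with hK
  have hbound : ∀ N : ℕ, 1 ≤ N →
      ‖Φ (momWord (((Real.sqrt N : ℂ))⁻¹ • ∑ k ∈ Finset.range N, X k)
        (fun t => ι (c t)) (s+1))‖ ≤ K / Real.sqrt N := by
    intro N hN
    have hN0 : (0:ℝ) < N := by exact_mod_cast hN
    have hsqpos : 0 < Real.sqrt N := Real.sqrt_pos.2 hN0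
    rw [hmw]
    set z : ℂ := ((Real.sqrt N : ℝ) : ℂ)⁻¹ with hz
    have hsm : ML (fun _ => z • ∑ k ∈ Finset.range N, X k)
        = z ^ (s+1) • ML (fun _ => ∑ k ∈ Finset.range N, X k) := by
      have := ML.map_smul_univ (fun _ : Fin (s+1) => z)
        (fun _ => ∑ k ∈ Finset.range N, X k)
      simpa [Finset.prod_const] using this
    have hsum : ML (fun _ => ∑ k ∈ Finset.range N, X k)
        = ∑ j ∈ Fintype.piFinset (fun _ : Fin (s+1) => Finset.range N),
            ML (fun i => X (j i)) :=
      ML.map_sum_finset (fun _ k => X k) (fun _ => Finset.range N)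
    rw [hsm, hsum, map_smul, map_sum, norm_smul, norm_pow]
    have hznorm : ‖z‖ = (Real.sqrt N)⁻¹ := by
      rw [hz, norm_inv, Complex.norm_real, Real.norm_eq_abs,
        abs_of_nonneg (Real.sqrt_nonneg _)]
    set J := Fintype.piFinset (fun _ : Fin (s+1) => Finset.range N) with hJ
    set P : (Fin (s+1) → ℕ) → Prop := fun j => ∀ v, ¬ (List.ofFn j).count v = 1 with hP
    have hzero : ∀ j ∈ J, ¬ P j → Φ (ML (fun i => X (j i))) = 0 := by
      intro j hj hnotP
      rw [hWj]
      have hnotP' : ¬ ∀ v, ¬ (List.ofFn j).count v = 1 := hnotP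
      push_neg at hnotP'
      obtain ⟨v, hv⟩ := hnotP'
      refine singleton_zero ι Φ X hι hbimod hcent hindep (s+1) _ 1 v (by simp) ?_
      rw [List.map_ofFn]
      exact hv
    have hsplit : ∑ j ∈ J, Φ (ML fun i => X (j i))
        = ∑ j ∈ J.filter P, Φ (ML fun i => X (j i)) :=
      (Finset.sum_subset (Finset.filter_subset _ _) (fun j hj hnj =>
        hzero j hj (by simpa [Finset.mem_filter, hj] using hnj))).symm
    rw [hsplit]
    have h1 : ‖∑ j ∈ J.filter P, Φ (ML fun i => X (j i))‖
        ≤ ((J.filter P).card : ℝ) * C := by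
      refine le_trans (norm_sum_le _ _) ?_
      refine le_trans (Finset.sum_le_card_nsmul _ _ C ?_) ?_
      · intro j hj
        rw [hWj]
        exact hCb j
      · rw [nsmul_eq_mul]
    have hcard : ((J.filter P).card : ℝ) ≤ (((s+1:ℕ):ℝ)^(s+1)) * (N:ℝ)^h := by
      have h2 := card_no_singleton_le (m := s+1) (h := h) (N := N) hh' hN
      have h3 : ((J.filter P).card : ℝ) ≤ (((s+1)^(s+1) * N^h : ℕ) : ℝ) := by
        exact_mod_cast h2
      refine le_trans h3 ?_
      push_cast
      exact le_rfl
    have hpow : (Real.sqrt N)^(s+1) = (N:ℝ)^h * Real.sqrt N := by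
      rw [hh', pow_succ, pow_mul, Real.sq_sqrt (le_of_lt hN0)]
    calc ‖z‖^(s+1) * ‖∑ j ∈ J.filter P, Φ (ML fun i => X (j i))‖
        ≤ ‖z‖^(s+1) * (((J.filter P).card : ℝ) * C) := by
          exact mul_le_mul_of_nonneg_left h1 (by positivity)
      _ ≤ ‖z‖^(s+1) * (((((s+1:ℕ):ℝ)^(s+1)) * (N:ℝ)^h) * C) := by
          exact mul_le_mul_of_nonneg_left (mul_le_mul_of_nonneg_right hcard hC0)
            (by positivity)
      _ = K / Real.sqrt N := by
          rw [hznorm, inv_pow, hpow, hK]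
          field_simp
  have hsqrt_t : Filter.Tendsto (fun N : ℕ => Real.sqrt N) Filter.atTop Filter.atTop := by
    refine Filter.tendsto_atTop_atTop.2 (fun b => ⟨⌈b * b⌉₊, fun a ha => ?_⟩)
    have h1 : (b * b : ℝ) ≤ a :=
      le_trans (Nat.le_ceil _) (Nat.cast_le.2 ha)
    calc b ≤ |b| := le_abs_self b
      _ = Real.sqrt (b * b) := (Real.sqrt_mul_self_eq_abs b).symm
      _ ≤ Real.sqrt a := Real.sqrt_le_sqrt h1
  have hlim : Filter.Tendsto (fun N : ℕ => K / Real.sqrt N) Filter.atTop (nhds 0) := by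
    have h2 := (hsqrt_t.inv_tendsto_atTop).const_mul K
    simpa [div_eq_mul_inv] using h2
  exact squeeze_zero_norm' ((Filter.eventually_ge_atTop 1).mono (fun N hN => hbound N hN)) hlim
end
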